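/- arXiv:1910.06798 — 5 statements merged into one kernel-verified Lean document; each statement's English description precedes it below -/
import Mathlib

section
/- If u ∈ 𝒱 and there exists ε > 0 such that u(z) ≥ ε for every z ∈ ℝ, then 1/u ∈ 𝒱; that is, the function z ↦ 1/u(z) is the value function of some polynomial game. -/
open Polynomial

/-- The value of a finite two-player zero-sum matrix game with payoff matrix `G`:
`sup` over mixed strategies of Player 1 of `inf` over mixed strategies of Player 2
of the expected payoff. -/
noncomputable def matrixValue {A B : Type} [Fintype A] [Fintype B] (G : A → B → ℝ) : ℝ :=
  ⨆ x : stdSimplex ℝ A, ⨅ y : stdSimplex ℝ B, ∑ a : A, ∑ b : B, x.1 a * G a b * y.1 b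

/-- `u ∈ 𝒱`: `u` is the value function of some two-player zero-sum polynomial game,
i.e. there are finite nonempty strategy sets `A`, `B` and a matrix `G` of real polynomials
such that `u z` is the value of the matrix game `G` evaluated at `z`, for every `z`. -/
def InV (u : ℝ → ℝ) : Prop :=
  ∃ (A B : Type) (iA : Fintype A) (iB : Fintype B), Nonempty A ∧ Nonempty B ∧
    ∃ G : A → B → Polynomial ℝ,
      ∀ z : ℝ, u z = @matrixValue A B iA iB fun a b => (G a b).eval z

namespace InVAux

variable {E F : Type} [Fintype E] [Fintype F]

noncomputable def pay (M : E → F → ℝ) (x : stdSimplex ℝ E) (y : stdSimplex ℝ F) : ℝ :=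
  ∑ a : E, ∑ b : F, x.1 a * M a b * y.1 b

lemma matrixValue_eq (M : E → F → ℝ) : matrixValue M = ⨆ x, ⨅ y, pay M x y := rfl

lemma simplex_nonneg (x : stdSimplex ℝ E) (a : E) : 0 ≤ x.1 a := x.2.1 a

lemma simplex_sum (x : stdSimplex ℝ E) : ∑ a, x.1 a = 1 := x.2.2

lemma simplex_le_one (x : stdSimplex ℝ E) (a : E) : x.1 a ≤ 1 := by
  have h := Finset.single_le_sum (f := x.1) (fun i _ => x.2.1 i) (Finset.mem_univ a)
  rw [simplex_sum] at h
  exact h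

open scoped Classical in
noncomputable def pureStrat (b : F) : stdSimplex ℝ F :=
  ⟨fun j => if b = j then 1 else 0, ite_eq_mem_stdSimplex ℝ b⟩

instance [Nonempty F] : Nonempty (stdSimplex ℝ F) :=
  ⟨pureStrat (Classical.arbitrary F)⟩

lemma pay_pure (M : E → F → ℝ) (x : stdSimplex ℝ E) (b : F) :
    pay M x (pureStrat b) = ∑ a, x.1 a * M a b := by
  classical
  unfold pay pureStrat
  simp [mul_ite, Finset.sum_ite_eq]

lemma abs_pay_le (M : E → F → ℝ) (x : stdSimplex ℝ E) (y : stdSimplex ℝ F) :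
    |pay M x y| ≤ ∑ a, ∑ b, |M a b| := by
  refine (Finset.abs_sum_le_sum_abs _ _).trans (Finset.sum_le_sum fun a _ => ?_)
  refine (Finset.abs_sum_le_sum_abs _ _).trans (Finset.sum_le_sum fun b _ => ?_)
  rw [abs_mul, abs_mul, abs_of_nonneg (simplex_nonneg x a), abs_of_nonneg (simplex_nonneg y b)]
  have h1 := simplex_le_one x a
  have h2 := simplex_le_one y b
  have h3 := simplex_nonneg x a
  have h4 := simplex_nonneg y b
  have h5 := abs_nonneg (M a b)
  have hxy : x.1 a * y.1 b ≤ 1 := by nlinarith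
  calc x.1 a * |M a b| * y.1 b = (x.1 a * y.1 b) * |M a b| := by ring
    _ ≤ 1 * |M a b| := mul_le_mul_of_nonneg_right hxy h5
    _ = |M a b| := one_mul _

lemma bddBelow_pay (M : E → F → ℝ) (x : stdSimplex ℝ E) :
    BddBelow (Set.range fun y : stdSimplex ℝ F => pay M x y) := by
  refine ⟨-(∑ a, ∑ b, |M a b|), ?_⟩
  rintro r ⟨y, rfl⟩
  exact neg_le_of_abs_le (abs_pay_le M x y)

lemma bddAbove_iInf_pay [Nonempty F] (M : E → F → ℝ) :
    BddAbove (Set.range fun x : stdSimplex ℝ E => ⨅ y, pay M x y) := by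
  refine ⟨∑ a, ∑ b, |M a b|, ?_⟩
  rintro r ⟨x, rfl⟩
  exact (ciInf_le (bddBelow_pay M x) (Classical.arbitrary _)).trans
    (le_of_abs_le (abs_pay_le M x _))

lemma matrixValue_le_of [Nonempty E] [Nonempty F] {M : E → F → ℝ} {c : ℝ}
    (h : ∀ x : stdSimplex ℝ E, ∃ y, pay M x y ≤ c) : matrixValue M ≤ c := by
  rw [matrixValue_eq]
  refine ciSup_le fun x => ?_
  obtain ⟨y, hy⟩ := h x
  exact (ciInf_le (bddBelow_pay M x) y).trans hy

lemma le_pay_of_cols {M : E → F → ℝ} {c : ℝ} (x : stdSimplex ℝ E)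
    (h : ∀ b, c ≤ ∑ a, x.1 a * M a b) (y : stdSimplex ℝ F) : c ≤ pay M x y := by
  have hrw : pay M x y = ∑ b, (∑ a, x.1 a * M a b) * y.1 b := by
    rw [pay, Finset.sum_comm]
    exact Finset.sum_congr rfl fun b _ => by rw [Finset.sum_mul]
  rw [hrw]
  calc c = ∑ b, c * y.1 b := by rw [← Finset.mul_sum, simplex_sum, mul_one]
    _ ≤ _ := Finset.sum_le_sum fun b _ =>
        mul_le_mul_of_nonneg_right (h b) (simplex_nonneg y b)

lemma le_matrixValue_of [Nonempty E] [Nonempty F] {M : E → F → ℝ} {c : ℝ}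
    (x : stdSimplex ℝ E) (h : ∀ y, c ≤ pay M x y) : c ≤ matrixValue M := by
  rw [matrixValue_eq]
  exact (le_ciInf h).trans (le_ciSup (bddAbove_iInf_pay M) x)


omit [Fintype E] in
lemma continuous_finset_sup' {X : Type*} [TopologicalSpace X] (s : Finset E)
    (hs : s.Nonempty) (f : E → X → ℝ) (hf : ∀ i, Continuous (f i)) :
    Continuous fun x => s.sup' hs fun i => f i x := by
  induction hs using Finset.Nonempty.cons_induction with
  | singleton i => simpa using hf i
  | cons a s ha hne ih =>
    simp only [Finset.sup'_cons hne]
    exact (hf a).sup ih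

open scoped Classical in
lemma exists_optimal [Nonempty E] [Nonempty F] (M : E → F → ℝ) :
    ∃ xs ∈ stdSimplex ℝ E, ∃ ys ∈ stdSimplex ℝ F,
      (∀ b, matrixValue M ≤ ∑ a, xs a * M a b) ∧
      (∀ a, ∑ b, M a b * ys b ≤ matrixValue M) := by
  classical
  -- the linear map y ↦ M y
  let L : (F → ℝ) →ₗ[ℝ] (E → ℝ) :=
    { toFun := fun y a => ∑ b, M a b * y b
      map_add' := by
        intro y₁ y₂; funext a
        simp only [Pi.add_apply, mul_add, Finset.sum_add_distrib]
      map_smul' := by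
        intro c y; funext a
        show ∑ b, M a b * (c * y b) = c * ∑ b, M a b * y b
        rw [Finset.mul_sum]
        exact Finset.sum_congr rfl fun b _ => by ring }
  have hLcont : ∀ a : E, Continuous fun y : F → ℝ => L y a := by
    intro a
    exact continuous_finset_sum _ fun b _ => Continuous.mul continuous_const (continuous_apply b)
  let g : (F → ℝ) → ℝ := fun y => Finset.univ.sup' Finset.univ_nonempty fun a => L y a
  have hgcont : Continuous g :=
    continuous_finset_sup' _ _ (fun a y => L y a) hLcont
  obtain ⟨ys, hysΔ, hmin⟩ :=
    (isCompact_stdSimplex (𝕜 := ℝ) (ι := F)).exists_isMinOn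
      (Set.nonempty_of_mem (ite_eq_mem_stdSimplex ℝ (Classical.arbitrary F)))
      hgcont.continuousOn
  set w : ℝ := g ys with hw
  have hrow : ∀ a, L ys a ≤ w := fun a => Finset.le_sup' (fun a => L ys a) (Finset.mem_univ a)
  -- separation
  set s : Set (E → ℝ) := Set.univ.pi fun _ : E => Set.Iio w with hs_def
  have hmem_s : ∀ v : E → ℝ, (∀ a, v a < w) → v ∈ s := by
    intro v hv
    rw [hs_def, Set.mem_univ_pi]
    exact hv
  have hdisj : Disjoint s (L '' stdSimplex ℝ F) := by
    rw [Set.disjoint_left]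
    rintro v hv ⟨y, hyΔ, rfl⟩
    have h1 : w ≤ g y := hmin hyΔ
    obtain ⟨a, -, ha⟩ := Finset.exists_mem_eq_sup' Finset.univ_nonempty fun a => L y a
    have h2 : L y a < w := by
      rw [hs_def, Set.mem_univ_pi] at hv
      exact hv a
    rw [← ha] at h2
    exact absurd (h1.trans_lt h2) (lt_irrefl w)
  obtain ⟨f, u, hfs, hft⟩ :=
    geometric_hahn_banach_open (convex_pi fun _ _ => convex_Iio w)
      (isOpen_set_pi Set.finite_univ fun _ _ => isOpen_Iio)
      ((convex_stdSimplex ℝ F).linear_image L) hdisj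
  set xt : E → ℝ := fun a => f fun j => if a = j then 1 else 0 with hxt
  have hf_eval : ∀ v : E → ℝ, f v = ∑ a, v a * xt a := by
    intro v
    conv_lhs => rw [pi_eq_sum_univ v]
    rw [map_sum]
    simp only [map_smul, smul_eq_mul, hxt]
  have h0 : f (fun _ => w - 1) < u :=
    hfs _ (hmem_s _ fun a => by linarith)
  have hnonneg : ∀ a, 0 ≤ xt a := by
    intro a
    by_contra hneg
    push_neg at hneg
    set T : ℝ := (u - f fun _ => w - 1) / (-xt a) with hT
    have hT0 : 0 ≤ T := div_nonneg (by linarith) (by linarith)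
    have hmem : ((fun _ => w - 1) - T • fun j => if a = j then (1:ℝ) else 0 : E → ℝ) ∈ s := by
      refine hmem_s _ fun j => ?_
      have : (0:ℝ) ≤ T * if a = j then 1 else 0 := by
        positivity
      simp only [Pi.sub_apply, Pi.smul_apply, smul_eq_mul]
      linarith
    have := hfs _ hmem
    rw [map_sub, map_smul, smul_eq_mul] at this
    have hxa0 : (f fun j => if a = j then (1:ℝ) else 0) = xt a := rfl
    rw [hxa0] at this
    have hxa : xt a ≠ 0 := ne_of_lt hneg
    have hx : T * xt a = -(u - f fun _ => w - 1) := by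
      rw [hT]
      field_simp
    rw [hx] at this
    linarith
  set S : ℝ := ∑ a, xt a with hSdef
  have hS0 : 0 ≤ S := Finset.sum_nonneg fun a _ => hnonneg a
  have hSpos : 0 < S := by
    rcases hS0.lt_or_eq with h | h
    · exact h
    · exfalso
      have hall : ∀ a ∈ Finset.univ, xt a = 0 :=
        (Finset.sum_eq_zero_iff_of_nonneg fun a _ => hnonneg a).1 h.symm
      have h1 : f (fun _ => w - 1) = 0 := by
        rw [hf_eval]
        exact Finset.sum_eq_zero fun a _ => by rw [hall a (Finset.mem_univ a), mul_zero]
      have hy0 : (fun j => if Classical.arbitrary F = j then (1:ℝ) else 0) ∈ stdSimplex ℝ F :=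
        ite_eq_mem_stdSimplex ℝ _
      have h2 : u ≤ f (L fun j => if Classical.arbitrary F = j then (1:ℝ) else 0) :=
        hft _ ⟨_, hy0, rfl⟩
      have h3 : f (L fun j => if Classical.arbitrary F = j then (1:ℝ) else 0) = 0 := by
        rw [hf_eval]
        exact Finset.sum_eq_zero fun a _ => by rw [hall a (Finset.mem_univ a), mul_zero]
      rw [h3] at h2
      rw [h1] at h0
      linarith
  have hwSu : w * S ≤ u := by
    by_contra hlt
    push_neg at hlt
    set δ : ℝ := (w * S - u) / S with hδ
    have hδ0 : 0 < δ := div_pos (by linarith) hSpos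
    have hmem : (fun _ : E => w - δ) ∈ s := hmem_s _ fun a => by linarith
    have h1 := hfs _ hmem
    rw [hf_eval] at h1
    have h2 : ∑ a, (w - δ) * xt a = (w - δ) * S := by
      rw [← Finset.mul_sum]
    rw [h2] at h1
    have hδS : δ * S = w * S - u := by
      rw [hδ, div_mul_cancel₀ _ hSpos.ne']
    have h3 : (w - δ) * S = u := by
      rw [sub_mul, hδS]; ring
    linarith
  refine ⟨fun a => xt a / S, ⟨fun a => div_nonneg (hnonneg a) hS0, by
    rw [← Finset.sum_div, div_self hSpos.ne']⟩, ys, hysΔ, ?_, ?_⟩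
  · -- columns
    intro b
    have hyb : (fun j => if b = j then (1:ℝ) else 0) ∈ stdSimplex ℝ F :=
      ite_eq_mem_stdSimplex ℝ b
    have h1 : u ≤ f (L fun j => if b = j then (1:ℝ) else 0) := hft _ ⟨_, hyb, rfl⟩
    have h2 : (L fun j => if b = j then (1:ℝ) else 0) = fun a => M a b := by
      funext a
      simp [L, mul_ite, Finset.sum_ite_eq]
    rw [h2, hf_eval] at h1
    have hcol : w ≤ ∑ a, (xt a / S) * M a b := by
      have hsum : ∑ a, xt a / S * M a b = (∑ a, M a b * xt a) / S := by
        rw [Finset.sum_div]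
        exact Finset.sum_congr rfl fun a _ => by ring
      rw [hsum, le_div_iff₀ hSpos]
      linarith
    -- now show matrixValue M ≤ w, then conclude
    have hvw : matrixValue M ≤ w := by
      refine matrixValue_le_of fun x => ⟨⟨ys, hysΔ⟩, ?_⟩
      have hpv : pay M x ⟨ys, hysΔ⟩ = ∑ a, x.1 a * L ys a := by
        unfold pay
        exact Finset.sum_congr rfl fun a _ => by
          simp [L, Finset.mul_sum, mul_assoc]
      rw [hpv]
      calc ∑ a, x.1 a * L ys a ≤ ∑ a, x.1 a * w :=
            Finset.sum_le_sum fun a _ =>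
              mul_le_mul_of_nonneg_left (hrow a) (simplex_nonneg x a)
        _ = w := by rw [← Finset.sum_mul, simplex_sum, one_mul]
    exact hvw.trans hcol
  · -- rows
    intro a
    have hwv : w ≤ matrixValue M := by
      refine le_matrixValue_of ⟨fun a => xt a / S, ⟨fun a => div_nonneg (hnonneg a) hS0, by
        rw [← Finset.sum_div, div_self hSpos.ne']⟩⟩ ?_
      refine le_pay_of_cols _ fun b => ?_
      -- same column computation as above
      have hyb : (fun j => if b = j then (1:ℝ) else 0) ∈ stdSimplex ℝ F :=
        ite_eq_mem_stdSimplex ℝ b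
      have h1 : u ≤ f (L fun j => if b = j then (1:ℝ) else 0) := hft _ ⟨_, hyb, rfl⟩
      have h2 : (L fun j => if b = j then (1:ℝ) else 0) = fun a => M a b := by
        funext a
        simp [L, mul_ite, Finset.sum_ite_eq]
      rw [h2, hf_eval] at h1
      have : ∑ a, xt a / S * M a b = (∑ a, M a b * xt a) / S := by
        rw [Finset.sum_div]
        exact Finset.sum_congr rfl fun a _ => by ring
      rw [this, le_div_iff₀ hSpos]
      linarith
    exact (hrow a).trans hwv

end InVAux

/-- The payoff matrix of the "reciprocal game". -/
noncomputable def recipMat {A B : Type} (ε : ℝ) (G : A → B → Polynomial ℝ) :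
    Option (A × B) → B ⊕ A → Polynomial ℝ := fun o c =>
  Option.elim o
    (Sum.elim (fun _ => Polynomial.C (-ε⁻¹)) (fun _ => Polynomial.C ε⁻¹))
    (fun p => Sum.elim (fun b' => Polynomial.C (ε⁻¹ * ε⁻¹) * G p.1 b')
      (fun a' => Polynomial.C (2 * ε⁻¹) - Polynomial.C (ε⁻¹ * ε⁻¹) * G a' p.2)) c

open InVAux in
lemma recipMat_value {A B : Type} [Fintype A] [Fintype B] [Nonempty A] [Nonempty B]
    {ε v : ℝ} (hε : 0 < ε) (hvε : ε ≤ v)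
    (N : Option (A × B) → B ⊕ A → ℝ) (M : A → B → ℝ)
    (eSI : ∀ (p : A × B) (b' : B), N (some p) (Sum.inl b') = ε⁻¹ * ε⁻¹ * M p.1 b')
    (eSR : ∀ (p : A × B) (a' : A), N (some p) (Sum.inr a') = 2 * ε⁻¹ - ε⁻¹ * ε⁻¹ * M a' p.2)
    (eNI : ∀ b' : B, N none (Sum.inl b') = -ε⁻¹)
    (eNR : ∀ a' : A, N none (Sum.inr a') = ε⁻¹)
    (hval : matrixValue M = v) : matrixValue N = 1 / v := by
  classical
  haveI : Nonempty (B ⊕ A) := ⟨Sum.inl (Classical.arbitrary B)⟩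
  have hv0 : 0 < v := lt_of_lt_of_le hε hvε
  have hei : 0 ≤ ε⁻¹ := inv_nonneg.2 hε.le
  have heii : 0 ≤ ε⁻¹ * ε⁻¹ := mul_nonneg hei hei
  obtain ⟨xs, hxs, ys, hys, hcol, hrow⟩ := exists_optimal M
  rw [hval] at hcol hrow
  have hεv0 : 0 < ε / v := div_pos hε hv0
  have hεv1 : ε / v ≤ 1 := (div_le_one hv0).2 hvε
  have hsum1 : ∑ p : A × B, xs p.1 * ys p.2 = 1 := by
    rw [Fintype.sum_prod_type, ← Finset.sum_mul_sum, hxs.2, hys.2, one_mul]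
  -- Player 1's good strategy in the new game
  have hxhatmem : (fun o : Option (A × B) =>
      Option.elim o (1 - ε / v) fun p => ε / v * (xs p.1 * ys p.2)) ∈
      stdSimplex ℝ (Option (A × B)) := by
    constructor
    · intro o
      cases o with
      | none =>
        show (0:ℝ) ≤ 1 - ε / v
        linarith
      | some p =>
        exact mul_nonneg hεv0.le (mul_nonneg (hxs.1 _) (hys.1 _))
    · rw [Fintype.sum_option]
      show (1 - ε / v) + ∑ p : A × B, ε / v * (xs p.1 * ys p.2) = 1
      rw [← Finset.mul_sum, hsum1, mul_one]
      ring
  set xhat : stdSimplex ℝ (Option (A × B)) := ⟨_, hxhatmem⟩ with hxhat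
  have hxhn : xhat.1 none = 1 - ε / v := rfl
  have hxhs : ∀ p : A × B, xhat.1 (some p) = ε / v * (xs p.1 * ys p.2) := fun p => rfl
  -- Lower bound : 1/v ≤ value
  have hlo : 1 / v ≤ matrixValue N := by
    refine le_matrixValue_of xhat (le_pay_of_cols xhat ?_)
    intro c
    cases c with
    | inl b' =>
      have hkey : ∑ p : A × B, xs p.1 * ys p.2 * M p.1 b' = ∑ a, xs a * M a b' := by
        rw [Fintype.sum_prod_type]
        refine Finset.sum_congr rfl fun a _ => ?_
        calc ∑ b, xs a * ys b * M a b' = ∑ b, xs a * M a b' * ys b :=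
              Finset.sum_congr rfl fun b _ => by ring
          _ = xs a * M a b' * ∑ b, ys b := by rw [← Finset.mul_sum]
          _ = xs a * M a b' := by rw [hys.2, mul_one]
      have hsum : ∑ o : Option (A × B), xhat.1 o * N o (Sum.inl b') =
          (1 - ε / v) * (-ε⁻¹) + ε / v * (ε⁻¹ * ε⁻¹) * ∑ a, xs a * M a b' := by
        rw [Fintype.sum_option]
        have h1 : xhat.1 none * N none (Sum.inl b') = (1 - ε / v) * (-ε⁻¹) := by
          rw [hxhn, eNI b']
        have h2 : ∑ p : A × B, xhat.1 (some p) * N (some p) (Sum.inl b') =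
            ε / v * (ε⁻¹ * ε⁻¹) * ∑ p : A × B, xs p.1 * ys p.2 * M p.1 b' := by
          rw [Finset.mul_sum]
          refine Finset.sum_congr rfl fun p _ => ?_
          rw [hxhs p, eSI p b']
          ring
        rw [h1, h2, hkey]
      rw [hsum]
      have hT : v ≤ ∑ a, xs a * M a b' := hcol b'
      set T : ℝ := ∑ a, xs a * M a b' with hTdef
      have hid : (1 - ε / v) * (-ε⁻¹) + ε / v * (ε⁻¹ * ε⁻¹) * T - 1 / v
          = (T - v) / (v * ε) := by
        field_simp
        ring
      have hnn : 0 ≤ (T - v) / (v * ε) :=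
        div_nonneg (by linarith) (mul_nonneg hv0.le hε.le)
      linarith
    | inr a' =>
      have hkey : ∑ p : A × B, xs p.1 * ys p.2 * M a' p.2 = ∑ b, M a' b * ys b := by
        rw [Fintype.sum_prod_type]
        calc ∑ a, ∑ b, xs a * ys b * M a' b
            = ∑ a, xs a * ∑ b, M a' b * ys b := by
              refine Finset.sum_congr rfl fun a _ => ?_
              rw [Finset.mul_sum]
              exact Finset.sum_congr rfl fun b _ => by ring
          _ = (∑ a, xs a) * ∑ b, M a' b * ys b := by rw [← Finset.sum_mul]
          _ = ∑ b, M a' b * ys b := by rw [hxs.2, one_mul]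
      have hsum : ∑ o : Option (A × B), xhat.1 o * N o (Sum.inr a') =
          (1 - ε / v) * ε⁻¹ + ε / v * (2 * ε⁻¹)
            - ε / v * (ε⁻¹ * ε⁻¹) * ∑ b, M a' b * ys b := by
        rw [Fintype.sum_option]
        have h1 : xhat.1 none * N none (Sum.inr a') = (1 - ε / v) * ε⁻¹ := by
          rw [hxhn, eNR a']
        have h2 : ∑ p : A × B, xhat.1 (some p) * N (some p) (Sum.inr a') =
            ε / v * (2 * ε⁻¹) * ∑ p : A × B, xs p.1 * ys p.2
              - ε / v * (ε⁻¹ * ε⁻¹) * ∑ p : A × B, xs p.1 * ys p.2 * M a' p.2 := by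
          rw [Finset.mul_sum, Finset.mul_sum, ← Finset.sum_sub_distrib]
          refine Finset.sum_congr rfl fun p _ => ?_
          rw [hxhs p, eSR p a']
          ring
        rw [h1, h2, hsum1, hkey, mul_one]
        ring
      rw [hsum]
      have hR : ∑ b, M a' b * ys b ≤ v := hrow a'
      set R : ℝ := ∑ b, M a' b * ys b with hRdef
      have hid : (1 - ε / v) * ε⁻¹ + ε / v * (2 * ε⁻¹) - ε / v * (ε⁻¹ * ε⁻¹) * R - 1 / v
          = (v - R) / (v * ε) := by
        field_simp
        ring
      have hnn : 0 ≤ (v - R) / (v * ε) :=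
        div_nonneg (by linarith) (mul_nonneg hv0.le hε.le)
      linarith
  -- Upper bound : value ≤ 1/v
  have hup : matrixValue N ≤ 1 / v := by
    refine matrixValue_le_of fun x => ?_
    set ρ : ℝ := ∑ p : A × B, x.1 (some p) with hρdef
    have hρ0 : 0 ≤ ρ := Finset.sum_nonneg fun p _ => x.2.1 _
    have hxnone : x.1 none = 1 - ρ := by
      have h := x.2.2
      rw [Fintype.sum_option] at h
      rw [hρdef]
      linarith
    by_cases hc : ρ ≤ ε / v
    · -- respond with ys on the inl-part
      have hymem : (Sum.elim ys fun _ : A => (0:ℝ)) ∈ stdSimplex ℝ (B ⊕ A) := by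
        constructor
        · rintro (b | a)
          · exact hys.1 b
          · exact le_refl 0
        · rw [Fintype.sum_sum_type]
          show (∑ b, ys b) + ∑ _a : A, (0:ℝ) = 1
          rw [hys.2, Finset.sum_const, smul_zero, add_zero]
      refine ⟨⟨_, hymem⟩, ?_⟩
      have hpay : pay N x ⟨_, hymem⟩ = ∑ o : Option (A × B),
          ∑ b', x.1 o * N o (Sum.inl b') * ys b' := by
        unfold pay
        refine Finset.sum_congr rfl fun o _ => ?_
        rw [Fintype.sum_sum_type]
        have hz : ∑ a' : A, x.1 o * N o (Sum.inr a') * (Sum.elim ys (fun _ : A => (0:ℝ)) (Sum.inr a')) = 0 :=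
          Finset.sum_eq_zero fun a' _ => by
            show x.1 o * N o (Sum.inr a') * 0 = 0
            rw [mul_zero]
        rw [hz, add_zero]
        rfl
      rw [hpay, Fintype.sum_option]
      have h1 : ∑ b', x.1 none * N none (Sum.inl b') * ys b' = (1 - ρ) * (-ε⁻¹) := by
        calc ∑ b', x.1 none * N none (Sum.inl b') * ys b'
            = ∑ b', x.1 none * (-ε⁻¹) * ys b' :=
              Finset.sum_congr rfl fun b' _ => by rw [eNI b']
          _ = x.1 none * (-ε⁻¹) * ∑ b', ys b' := by rw [← Finset.mul_sum]
          _ = (1 - ρ) * (-ε⁻¹) := by rw [hys.2, mul_one, hxnone]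
      have h3 : ∑ p : A × B, ∑ b', x.1 (some p) * N (some p) (Sum.inl b') * ys b'
          ≤ ∑ p : A × B, x.1 (some p) * (ε⁻¹ * ε⁻¹) * v := by
        refine Finset.sum_le_sum fun p _ => ?_
        have h2 : ∑ b', x.1 (some p) * N (some p) (Sum.inl b') * ys b' =
            x.1 (some p) * (ε⁻¹ * ε⁻¹) * ∑ b', M p.1 b' * ys b' := by
          rw [Finset.mul_sum]
          refine Finset.sum_congr rfl fun b' _ => ?_
          rw [eSI p b']
          ring
        rw [h2]
        exact mul_le_mul_of_nonneg_left (hrow p.1) (mul_nonneg (x.2.1 _) heii)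
      have h4 : ∑ p : A × B, x.1 (some p) * (ε⁻¹ * ε⁻¹) * v = ρ * (ε⁻¹ * ε⁻¹) * v := by
        rw [hρdef, Finset.sum_mul, Finset.sum_mul]
      have h5 : 0 ≤ ε⁻¹ + ε⁻¹ * ε⁻¹ * v := by
        have := mul_nonneg heii hv0.le
        linarith
      have h6 := mul_le_mul_of_nonneg_right hc h5
      have hid : -ε⁻¹ + ε / v * (ε⁻¹ + ε⁻¹ * ε⁻¹ * v) = 1 / v := by
        field_simp
        ring
      rw [h1]
      have h7' := h3.trans_eq h4
      have hexp : (1 - ρ) * (-ε⁻¹) + ρ * (ε⁻¹ * ε⁻¹) * v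
          = -ε⁻¹ + ρ * (ε⁻¹ + ε⁻¹ * ε⁻¹ * v) - ρ * ε⁻¹ * ε⁻¹ * ε * 0 := by ring
      linarith [h6, hid, h7', hexp]
    · -- respond with xs on the inr-part
      push_neg at hc
      have hxmem : (Sum.elim (fun _ : B => (0:ℝ)) xs) ∈ stdSimplex ℝ (B ⊕ A) := by
        constructor
        · rintro (b | a)
          · exact le_refl 0
          · exact hxs.1 a
        · rw [Fintype.sum_sum_type]
          show (∑ _b : B, (0:ℝ)) + ∑ a, xs a = 1
          rw [hxs.2, Finset.sum_const, smul_zero, zero_add]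
      refine ⟨⟨_, hxmem⟩, ?_⟩
      have hpay : pay N x ⟨_, hxmem⟩ = ∑ o : Option (A × B),
          ∑ a', x.1 o * N o (Sum.inr a') * xs a' := by
        unfold pay
        refine Finset.sum_congr rfl fun o _ => ?_
        rw [Fintype.sum_sum_type]
        have hz : ∑ b' : B, x.1 o * N o (Sum.inl b') * (Sum.elim (fun _ : B => (0:ℝ)) xs (Sum.inl b')) = 0 :=
          Finset.sum_eq_zero fun b' _ => by
            show x.1 o * N o (Sum.inl b') * 0 = 0
            rw [mul_zero]
        rw [hz, zero_add]
        rfl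
      rw [hpay, Fintype.sum_option]
      have h1 : ∑ a', x.1 none * N none (Sum.inr a') * xs a' = (1 - ρ) * ε⁻¹ := by
        calc ∑ a', x.1 none * N none (Sum.inr a') * xs a'
            = ∑ a', x.1 none * ε⁻¹ * xs a' :=
              Finset.sum_congr rfl fun a' _ => by rw [eNR a']
          _ = x.1 none * ε⁻¹ * ∑ a', xs a' := by rw [← Finset.mul_sum]
          _ = (1 - ρ) * ε⁻¹ := by rw [hxs.2, mul_one, hxnone]
      have h3 : ∑ p : A × B, ∑ a', x.1 (some p) * N (some p) (Sum.inr a') * xs a'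
          ≤ ∑ p : A × B, x.1 (some p) * (2 * ε⁻¹ - ε⁻¹ * ε⁻¹ * v) := by
        refine Finset.sum_le_sum fun p _ => ?_
        have h2 : ∑ a', x.1 (some p) * N (some p) (Sum.inr a') * xs a' =
            x.1 (some p) * (2 * ε⁻¹) - x.1 (some p) * (ε⁻¹ * ε⁻¹) * ∑ a', xs a' * M a' p.2 := by
          calc ∑ a', x.1 (some p) * N (some p) (Sum.inr a') * xs a'
              = ∑ a', (x.1 (some p) * (2 * ε⁻¹) * xs a'
                  - x.1 (some p) * (ε⁻¹ * ε⁻¹) * (xs a' * M a' p.2)) := by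
                refine Finset.sum_congr rfl fun a' _ => ?_
                rw [eSR p a']
                ring
            _ = (∑ a', x.1 (some p) * (2 * ε⁻¹) * xs a')
                  - ∑ a', x.1 (some p) * (ε⁻¹ * ε⁻¹) * (xs a' * M a' p.2) :=
                Finset.sum_sub_distrib _ _
            _ = x.1 (some p) * (2 * ε⁻¹) - x.1 (some p) * (ε⁻¹ * ε⁻¹) * ∑ a', xs a' * M a' p.2 := by
                rw [← Finset.mul_sum, ← Finset.mul_sum, hxs.2, mul_one]
        rw [h2]
        have hcl := hcol p.2
        have hnn : 0 ≤ x.1 (some p) * (ε⁻¹ * ε⁻¹) := mul_nonneg (x.2.1 _) heii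
        nlinarith
      have h4 : ∑ p : A × B, x.1 (some p) * (2 * ε⁻¹ - ε⁻¹ * ε⁻¹ * v)
          = ρ * (2 * ε⁻¹ - ε⁻¹ * ε⁻¹ * v) := by
        rw [hρdef, Finset.sum_mul]
      have hneg : ε⁻¹ - ε⁻¹ * ε⁻¹ * v ≤ 0 := by
        have h5 : 0 ≤ ε⁻¹ * ε⁻¹ * (v - ε) := mul_nonneg heii (by linarith)
        have h6 : ε⁻¹ * ε⁻¹ * ε = ε⁻¹ := by
          field_simp
        nlinarith
      have h7 := mul_le_mul_of_nonpos_right hc.le hneg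
      have hid : ε⁻¹ + ε / v * (ε⁻¹ - ε⁻¹ * ε⁻¹ * v) = 1 / v := by
        field_simp
        ring
      rw [h1]
      have h8 := h3.trans_eq h4
      have hexp : (1 - ρ) * ε⁻¹ + ρ * (2 * ε⁻¹ - ε⁻¹ * ε⁻¹ * v)
          = ε⁻¹ + ρ * (ε⁻¹ - ε⁻¹ * ε⁻¹ * v) := by ring
      linarith [h7, hid, h8, hexp]
  exact le_antisymm hup hlo

/-- If `u` is the value function of some polynomial game and `u ≥ ε` everywhere for some
`ε > 0`, then `z ↦ 1 / u z` is also the value function of some polynomial game. -/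
theorem InV.one_div (u : ℝ → ℝ) (hu : InV u)
    (hpos : ∃ ε : ℝ, 0 < ε ∧ ∀ z : ℝ, ε ≤ u z) :
    InV (fun z => 1 / u z) := by
  classical
  obtain ⟨ε, hε, hεu⟩ := hpos
  obtain ⟨A, B, iA, iB, hA, hB, G, hG⟩ := hu
  letI := iA; letI := iB
  haveI := hA; haveI := hB
  refine ⟨Option (A × B), B ⊕ A, inferInstance, inferInstance, ⟨none⟩,
    ⟨Sum.inl (Classical.arbitrary B)⟩, recipMat ε G, fun z => ?_⟩
  show 1 / u z = matrixValue fun o c => (recipMat ε G o c).eval z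
  refine (recipMat_value hε (hεu z) _ (fun a b => (G a b).eval z) ?_ ?_ ?_ ?_ (hG z).symm).symm
  · intro p b'
    simp [recipMat]
  · intro p a'
    simp [recipMat]
  · intro b'
    simp [recipMat]
  · intro a'
    simp [recipMat]
end

section
/- If u ∈ 𝒱, w ∈ 𝒱, and there exists z₀ ∈ ℝ with u(z₀) = w(z₀), then the function v : ℝ → ℝ defined by v(z) = u(z) for z ≤ z₀ and v(z) = w(z) for z > z₀ belongs to 𝒱. -/
open Polynomial

set_option linter.unusedSectionVars false

section Aux

section Core

variable {A B : Type} [Fintype A] [Fintype B] [Nonempty A] [Nonempty B]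

noncomputable def innerF (G : A → B → ℝ) (x : A → ℝ) : ℝ :=
  Finset.univ.inf' Finset.univ_nonempty (fun b => ∑ a, x a * G a b)

instance stdSimplex.nonempty' : Nonempty (stdSimplex ℝ B) := by
  classical
  exact ⟨⟨Pi.single (Classical.arbitrary B) 1, single_mem_stdSimplex ℝ _⟩⟩

lemma inf'_le_sum_simplex (c : B → ℝ) {y : B → ℝ} (hy : y ∈ stdSimplex ℝ B) :
    Finset.univ.inf' Finset.univ_nonempty c ≤ ∑ b, c b * y b := by
  calc Finset.univ.inf' Finset.univ_nonempty c
      = ∑ b, (Finset.univ.inf' Finset.univ_nonempty c) * y b := by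
        rw [← Finset.mul_sum, hy.2, mul_one]
    _ ≤ ∑ b, c b * y b := by
        refine Finset.sum_le_sum fun b _ => ?_
        exact mul_le_mul_of_nonneg_right (Finset.inf'_le c (Finset.mem_univ b)) (hy.1 b)

/-- inf over the simplex of a linear function is the min over pure strategies -/
lemma iInf_simplex_linear (c : B → ℝ) :
    ⨅ y : stdSimplex ℝ B, ∑ b, c b * y.1 b = Finset.univ.inf' Finset.univ_nonempty c := by
  classical
  apply le_antisymm
  · obtain ⟨b₀, -, hb₀⟩ := Finset.exists_mem_eq_inf' (Finset.univ_nonempty) c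
    have hpt : ∑ b, c b * (Pi.single b₀ 1 : B → ℝ) b = c b₀ := by
      rw [Finset.sum_eq_single b₀]
      · simp
      · intro b _ hb; simp [Pi.single_apply, hb]
      · simp
    rw [hb₀]
    refine le_trans (ciInf_le ⟨Finset.univ.inf' Finset.univ_nonempty c, ?_⟩
      (⟨Pi.single b₀ 1, single_mem_stdSimplex ℝ b₀⟩ : stdSimplex ℝ B)) (le_of_eq hpt)
    rintro r ⟨y, rfl⟩
    exact inf'_le_sum_simplex c y.2
  · exact le_ciInf fun y => inf'_le_sum_simplex c y.2

lemma matrixValue_eq (G : A → B → ℝ) :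
    matrixValue G = ⨆ x : stdSimplex ℝ A, innerF G x.1 := by
  unfold matrixValue
  refine iSup_congr fun x => ?_
  have h : ∀ y : stdSimplex ℝ B, ∑ a : A, ∑ b : B, x.1 a * G a b * y.1 b
      = ∑ b, (∑ a, x.1 a * G a b) * y.1 b := by
    intro y
    rw [Finset.sum_comm]
    exact Finset.sum_congr rfl fun b _ => (Finset.sum_mul _ _ _).symm
  rw [iInf_congr h, iInf_simplex_linear]
  rfl

/-- innerF is bounded in absolute value by an entrywise bound. -/
lemma abs_innerF_le {G : A → B → ℝ} {M : ℝ} (hM : ∀ a b, |G a b| ≤ M)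
    {x : A → ℝ} (hx : x ∈ stdSimplex ℝ A) : |innerF G x| ≤ M := by
  obtain ⟨b₀, -, hb₀⟩ := Finset.exists_mem_eq_inf' (Finset.univ_nonempty)
    (fun b => ∑ a, x a * G a b)
  have key : ∀ b : B, |∑ a, x a * G a b| ≤ M := by
    intro b
    calc |∑ a, x a * G a b| ≤ ∑ a, |x a * G a b| := Finset.abs_sum_le_sum_abs _ _
      _ ≤ ∑ a, x a * M := by
          refine Finset.sum_le_sum fun a _ => ?_
          rw [abs_mul, abs_of_nonneg (hx.1 a)]
          exact mul_le_mul_of_nonneg_left (hM a b) (hx.1 a)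
      _ = M := by rw [← Finset.sum_mul, hx.2, one_mul]
  rw [abs_le, innerF]
  constructor
  · rw [hb₀]; exact (abs_le.mp (key b₀)).1
  · exact le_trans (Finset.inf'_le _ (Finset.mem_univ b₀)) (abs_le.mp (key b₀)).2

lemma exists_bound (G : A → B → ℝ) : ∃ M : ℝ, ∀ a b, |G a b| ≤ M := by
  refine ⟨∑ a, ∑ b, |G a b|, fun a b => ?_⟩
  calc |G a b| ≤ ∑ b, |G a b| :=
        Finset.single_le_sum (f := fun b => |G a b|) (fun b _ => abs_nonneg _)
          (Finset.mem_univ b)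
    _ ≤ ∑ a, ∑ b, |G a b| :=
        Finset.single_le_sum (f := fun a => ∑ b, |G a b|)
          (fun a _ => Finset.sum_nonneg fun b _ => abs_nonneg _) (Finset.mem_univ a)

lemma bddAbove_innerF (G : A → B → ℝ) :
    BddAbove (Set.range fun x : stdSimplex ℝ A => innerF G x.1) := by
  obtain ⟨M, hM⟩ := exists_bound G
  exact ⟨M, by rintro r ⟨x, rfl⟩; exact (abs_le.mp (abs_innerF_le hM x.2)).2⟩

lemma le_matrixValue (G : A → B → ℝ) {x : A → ℝ} (hx : x ∈ stdSimplex ℝ A) :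
    innerF G x ≤ matrixValue G := by
  rw [matrixValue_eq]
  exact le_ciSup (bddAbove_innerF G) (⟨x, hx⟩ : stdSimplex ℝ A)

lemma matrixValue_le (G : A → B → ℝ) {r : ℝ}
    (h : ∀ x : A → ℝ, x ∈ stdSimplex ℝ A → innerF G x ≤ r) : matrixValue G ≤ r := by
  rw [matrixValue_eq]
  exact ciSup_le fun x => h x.1 x.2

lemma abs_matrixValue_le {G : A → B → ℝ} {M : ℝ} (hM : ∀ a b, |G a b| ≤ M) :
    |matrixValue G| ≤ M := by
  rw [abs_le]
  constructor
  · obtain ⟨x⟩ := (inferInstance : Nonempty (stdSimplex ℝ A))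
    exact le_trans (abs_le.mp (abs_innerF_le hM x.2)).1 (le_matrixValue G x.2)
  · exact matrixValue_le G fun x hx => (abs_le.mp (abs_innerF_le hM hx)).2

/-- Lipschitz property of the value in the entries. -/
lemma matrixValue_le_add_of_entry_le {G H : A → B → ℝ} {C : ℝ}
    (h : ∀ a b, G a b ≤ H a b + C) : matrixValue G ≤ matrixValue H + C := by
  refine matrixValue_le G fun x hx => ?_
  have key : innerF G x ≤ innerF H x + C := by
    obtain ⟨b₀, -, hb₀⟩ := Finset.exists_mem_eq_inf' (Finset.univ_nonempty)
      (fun b => ∑ a, x a * H a b)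
    unfold innerF
    rw [hb₀]
    refine le_trans (Finset.inf'_le _ (Finset.mem_univ b₀)) ?_
    calc ∑ a, x a * G a b₀ ≤ ∑ a, (x a * H a b₀ + x a * C) := by
          refine Finset.sum_le_sum fun a _ => ?_
          rw [← mul_add]
          exact mul_le_mul_of_nonneg_left (h a b₀) (hx.1 a)
      _ = ∑ a, x a * H a b₀ + C := by
          rw [Finset.sum_add_distrib, ← Finset.sum_mul, hx.2, one_mul]
  exact key.trans (add_le_add_left (le_matrixValue H hx) C)

lemma abs_matrixValue_sub_le {G H : A → B → ℝ} {C : ℝ}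
    (h : ∀ a b, |G a b - H a b| ≤ C) : |matrixValue G - matrixValue H| ≤ C := by
  rw [abs_sub_le_iff]
  constructor
  · have := matrixValue_le_add_of_entry_le (G := G) (H := H) (C := C)
      fun a b => by linarith [(abs_le.mp (h a b)).2]
    linarith
  · have := matrixValue_le_add_of_entry_le (G := H) (H := G) (C := C)
      fun a b => by linarith [(abs_le.mp (h a b)).1]
    linarith

lemma inf'_add_const (f : B → ℝ) (c : ℝ) :
    Finset.univ.inf' Finset.univ_nonempty (fun b => f b + c)
      = Finset.univ.inf' Finset.univ_nonempty f + c := by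
  apply le_antisymm
  · obtain ⟨b₀, -, h⟩ := Finset.exists_mem_eq_inf' (Finset.univ_nonempty) f
    rw [h]
    exact Finset.inf'_le _ (Finset.mem_univ b₀)
  · exact Finset.le_inf' _ _ fun b _ => add_le_add_left (Finset.inf'_le f (Finset.mem_univ b)) c

lemma innerF_add_const (G : A → B → ℝ) (c : ℝ) {x : A → ℝ} (hx : x ∈ stdSimplex ℝ A) :
    innerF (fun a b => G a b + c) x = innerF G x + c := by
  unfold innerF
  have hb : (fun b => ∑ a, x a * (G a b + c)) = fun b => (∑ a, x a * G a b) + c := by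
    funext b
    simp only [mul_add, Finset.sum_add_distrib, ← Finset.sum_mul, hx.2, one_mul]
  rw [hb, inf'_add_const]

/-- adding a constant to all entries shifts the value. -/
lemma matrixValue_add_const (G : A → B → ℝ) (c : ℝ) :
    matrixValue (fun a b => G a b + c) = matrixValue G + c := by
  apply le_antisymm
  · refine matrixValue_le _ fun x hx => ?_
    rw [innerF_add_const G c hx]
    exact add_le_add_left (le_matrixValue G hx) c
  · rw [← le_sub_iff_add_le]
    refine matrixValue_le G fun x hx => ?_
    rw [le_sub_iff_add_le, ← innerF_add_const G c hx]
    exact le_matrixValue _ hx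

end Core

section MinMax

variable {A B A' B' : Type} [Fintype A] [Fintype B] [Fintype A'] [Fintype B']
  [Nonempty A] [Nonempty B] [Nonempty A'] [Nonempty B']

lemma inf'_sum_type (f : B ⊕ B' → ℝ) :
    Finset.univ.inf' Finset.univ_nonempty f
      = min (Finset.univ.inf' Finset.univ_nonempty (fun b => f (Sum.inl b)))
            (Finset.univ.inf' Finset.univ_nonempty (fun b' => f (Sum.inr b'))) := by
  apply le_antisymm
  · exact le_min (Finset.le_inf' _ _ fun b _ => Finset.inf'_le _ (Finset.mem_univ _))
      (Finset.le_inf' _ _ fun b _ => Finset.inf'_le _ (Finset.mem_univ _))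
  · refine Finset.le_inf' _ _ fun q _ => ?_
    cases q with
    | inl b => exact le_trans (min_le_left _ _) (Finset.inf'_le _ (Finset.mem_univ b))
    | inr b => exact le_trans (min_le_right _ _) (Finset.inf'_le _ (Finset.mem_univ b))

lemma inf'_prod_add (f : B → ℝ) (g : B' → ℝ) :
    Finset.univ.inf' Finset.univ_nonempty (fun q : B × B' => f q.1 + g q.2)
      = Finset.univ.inf' Finset.univ_nonempty f + Finset.univ.inf' Finset.univ_nonempty g := by
  apply le_antisymm
  · obtain ⟨b₀, -, h₀⟩ := Finset.exists_mem_eq_inf' (Finset.univ_nonempty) f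
    obtain ⟨b₁, -, h₁⟩ := Finset.exists_mem_eq_inf' (Finset.univ_nonempty) g
    rw [h₀, h₁]
    exact Finset.inf'_le (fun q : B × B' => f q.1 + g q.2) (Finset.mem_univ (b₀, b₁))
  · exact Finset.le_inf' _ _ fun q _ =>
      add_le_add (Finset.inf'_le _ (Finset.mem_univ q.1)) (Finset.inf'_le _ (Finset.mem_univ q.2))

lemma inf'_mul_nonneg {α : ℝ} (hα : 0 ≤ α) (f : B → ℝ) :
    Finset.univ.inf' Finset.univ_nonempty (fun b => α * f b)
      = α * Finset.univ.inf' Finset.univ_nonempty f := by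
  apply le_antisymm
  · obtain ⟨b₀, -, h⟩ := Finset.exists_mem_eq_inf' (Finset.univ_nonempty) f
    rw [h]
    exact Finset.inf'_le (fun b => α * f b) (Finset.mem_univ b₀)
  · exact Finset.le_inf' _ _ fun b _ =>
      mul_le_mul_of_nonneg_left (Finset.inf'_le f (Finset.mem_univ b)) hα

/-- The game in which Player 2 additionally chooses which of the two games is played. -/
noncomputable def minGame (G : A → B → ℝ) (H : A' → B' → ℝ) : A × A' → B ⊕ B' → ℝ :=
  fun p q => Sum.elim (fun b => G p.1 b) (fun b' => H p.2 b') q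

lemma margA_mem {X : A × A' → ℝ} (hX : X ∈ stdSimplex ℝ (A × A')) :
    (fun a => ∑ a', X (a, a')) ∈ stdSimplex ℝ A := by
  constructor
  · exact fun a => Finset.sum_nonneg fun a' _ => hX.1 (a, a')
  · rw [← hX.2, Fintype.sum_prod_type]

lemma margA'_mem {X : A × A' → ℝ} (hX : X ∈ stdSimplex ℝ (A × A')) :
    (fun a' => ∑ a, X (a, a')) ∈ stdSimplex ℝ A' := by
  constructor
  · exact fun a' => Finset.sum_nonneg fun a _ => hX.1 (a, a')
  · rw [← hX.2, Fintype.sum_prod_type_right]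

lemma innerF_minGame (G : A → B → ℝ) (H : A' → B' → ℝ) (X : A × A' → ℝ) :
    innerF (minGame G H) X
      = min (innerF G (fun a => ∑ a', X (a, a'))) (innerF H (fun a' => ∑ a, X (a, a'))) := by
  unfold innerF minGame
  rw [inf'_sum_type]
  congr 1
  · congr 1
    funext b
    rw [Fintype.sum_prod_type]
    exact Finset.sum_congr rfl fun a _ => by
      rw [Finset.sum_mul]; simp only [Sum.elim_inl]
  · congr 1
    funext b'
    rw [Fintype.sum_prod_type_right]
    exact Finset.sum_congr rfl fun a' _ => by
      rw [Finset.sum_mul]; simp only [Sum.elim_inr]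

lemma matrixValue_minGame (G : A → B → ℝ) (H : A' → B' → ℝ) :
    matrixValue (minGame G H) = min (matrixValue G) (matrixValue H) := by
  apply le_antisymm
  · refine matrixValue_le _ fun X hX => ?_
    rw [innerF_minGame]
    exact min_le_min (le_matrixValue G (margA_mem hX)) (le_matrixValue H (margA'_mem hX))
  · refine le_of_forall_pos_le_add fun ε hε => ?_
    have h1 : matrixValue G - ε < ⨆ x : stdSimplex ℝ A, innerF G x.1 := by
      rw [← matrixValue_eq]; linarith
    have h2 : matrixValue H - ε < ⨆ x : stdSimplex ℝ A', innerF H x.1 := by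
      rw [← matrixValue_eq]; linarith
    obtain ⟨x, hx⟩ := exists_lt_of_lt_ciSup h1
    obtain ⟨x', hx'⟩ := exists_lt_of_lt_ciSup h2
    set X : A × A' → ℝ := fun p => x.1 p.1 * x'.1 p.2 with hXdef
    have hXmem : X ∈ stdSimplex ℝ (A × A') := by
      constructor
      · exact fun p => mul_nonneg (x.2.1 p.1) (x'.2.1 p.2)
      · rw [Fintype.sum_prod_type]
        simp only [hXdef, ← Finset.mul_sum, x'.2.2, mul_one]
        exact x.2.2
    have hmA : (fun a => ∑ a', X (a, a')) = x.1 := by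
      funext a
      simp only [hXdef, ← Finset.mul_sum, x'.2.2, mul_one]
    have hmA' : (fun a' => ∑ a, X (a, a')) = x'.1 := by
      funext a'
      simp only [hXdef, ← Finset.sum_mul, x.2.2, one_mul]
    have hkey : min (matrixValue G) (matrixValue H) - ε ≤ innerF (minGame G H) X := by
      rw [innerF_minGame, hmA, hmA']
      refine le_min ?_ ?_
      · have := min_le_left (matrixValue G) (matrixValue H); linarith
      · have := min_le_right (matrixValue G) (matrixValue H); linarith
    have := le_matrixValue (minGame G H) hXmem
    linarith

/-- The game in which Player 1 additionally chooses which of the two games is played. -/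
noncomputable def maxGame (G : A → B → ℝ) (H : A' → B' → ℝ) : A ⊕ A' → B × B' → ℝ :=
  fun p q => Sum.elim (fun a => G a q.1) (fun a' => H a' q.2) p

lemma innerF_maxGame (G : A → B → ℝ) (H : A' → B' → ℝ) (X : A ⊕ A' → ℝ) :
    innerF (maxGame G H) X
      = Finset.univ.inf' Finset.univ_nonempty (fun b => ∑ a, X (Sum.inl a) * G a b)
        + Finset.univ.inf' Finset.univ_nonempty (fun b' => ∑ a', X (Sum.inr a') * H a' b') := by
  unfold innerF maxGame
  rw [← inf'_prod_add]
  congr 1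
  funext q
  rw [Fintype.sum_sum_type]
  simp only [Sum.elim_inl, Sum.elim_inr]

lemma matrixValue_maxGame (G : A → B → ℝ) (H : A' → B' → ℝ) :
    matrixValue (maxGame G H) = max (matrixValue G) (matrixValue H) := by
  apply le_antisymm
  · refine matrixValue_le _ fun X hX => ?_
    rw [innerF_maxGame]
    set α : ℝ := ∑ a, X (Sum.inl a) with hα
    have hα0 : 0 ≤ α := Finset.sum_nonneg fun a _ => hX.1 (Sum.inl a)
    have hαβ : α + ∑ a', X (Sum.inr a') = 1 := by
      rw [hα, ← Fintype.sum_sum_type]; exact hX.2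
    have hβ0 : 0 ≤ ∑ a', X (Sum.inr a') := Finset.sum_nonneg fun a' _ => hX.1 (Sum.inr a')
    have term1 : Finset.univ.inf' Finset.univ_nonempty (fun b => ∑ a, X (Sum.inl a) * G a b)
        ≤ α * matrixValue G := by
      rcases eq_or_lt_of_le hα0 with h0 | hpos
      · have hz : ∀ a, X (Sum.inl a) = 0 := by
          intro a
          have := (Finset.sum_eq_zero_iff_of_nonneg (fun a _ => hX.1 (Sum.inl a))).mp h0.symm
          exact this a (Finset.mem_univ a)
        have : (fun b => ∑ a, X (Sum.inl a) * G a b) = fun _ => (0:ℝ) := by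
          funext b; simp [hz]
        rw [this, Finset.inf'_const, ← h0, zero_mul]
      · set xx : A → ℝ := fun a => X (Sum.inl a) / α with hxx
        have hxmem : xx ∈ stdSimplex ℝ A := by
          constructor
          · exact fun a => div_nonneg (hX.1 (Sum.inl a)) hα0
          · rw [hxx]
            simp only [← Finset.sum_div]
            rw [← hα, div_self (ne_of_gt hpos)]
        have hfe : (fun b => ∑ a, X (Sum.inl a) * G a b)
            = fun b => α * ∑ a, xx a * G a b := by
          funext b
          rw [Finset.mul_sum]
          refine Finset.sum_congr rfl fun a _ => ?_
          rw [hxx, ← mul_assoc, mul_div_cancel₀ _ (ne_of_gt hpos)]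
        rw [hfe, inf'_mul_nonneg hα0]
        exact mul_le_mul_of_nonneg_left (le_matrixValue G hxmem) hα0
    have term2 : Finset.univ.inf' Finset.univ_nonempty
          (fun b' => ∑ a', X (Sum.inr a') * H a' b')
        ≤ (∑ a', X (Sum.inr a')) * matrixValue H := by
      rcases eq_or_lt_of_le hβ0 with h0 | hpos
      · have hz : ∀ a', X (Sum.inr a') = 0 := by
          intro a'
          have := (Finset.sum_eq_zero_iff_of_nonneg (fun a' _ => hX.1 (Sum.inr a'))).mp h0.symm
          exact this a' (Finset.mem_univ a')
        have : (fun b' => ∑ a', X (Sum.inr a') * H a' b') = fun _ => (0:ℝ) := by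
          funext b'; simp [hz]
        rw [this, Finset.inf'_const, ← h0, zero_mul]
      · set xx : A' → ℝ := fun a' => X (Sum.inr a') / (∑ a', X (Sum.inr a')) with hxx
        have hxmem : xx ∈ stdSimplex ℝ A' := by
          constructor
          · exact fun a' => div_nonneg (hX.1 (Sum.inr a')) hβ0
          · rw [hxx]
            simp only [← Finset.sum_div]
            rw [div_self (ne_of_gt hpos)]
        have hfe : (fun b' => ∑ a', X (Sum.inr a') * H a' b')
            = fun b' => (∑ a', X (Sum.inr a')) * ∑ a', xx a' * H a' b' := by
          funext b'
          rw [Finset.mul_sum]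
          refine Finset.sum_congr rfl fun a' _ => ?_
          rw [hxx, ← mul_assoc, mul_div_cancel₀ _ (ne_of_gt hpos)]
        rw [hfe, inf'_mul_nonneg hβ0]
        exact mul_le_mul_of_nonneg_left (le_matrixValue H hxmem) hβ0
    have hmax1 : α * matrixValue G ≤ α * max (matrixValue G) (matrixValue H) :=
      mul_le_mul_of_nonneg_left (le_max_left _ _) hα0
    have hmax2 : (∑ a', X (Sum.inr a')) * matrixValue H
        ≤ (∑ a', X (Sum.inr a')) * max (matrixValue G) (matrixValue H) :=
      mul_le_mul_of_nonneg_left (le_max_right _ _) hβ0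
    have : α * max (matrixValue G) (matrixValue H)
        + (∑ a', X (Sum.inr a')) * max (matrixValue G) (matrixValue H)
        = max (matrixValue G) (matrixValue H) := by
      rw [← add_mul, hαβ, one_mul]
    linarith
  · refine max_le ?_ ?_
    · refine matrixValue_le G fun x hx => ?_
      classical
      set X : A ⊕ A' → ℝ := Sum.elim x (fun _ => 0) with hXdef
      have hXmem : X ∈ stdSimplex ℝ (A ⊕ A') := by
        constructor
        · rintro (a | a')
          · exact hx.1 a
          · exact le_refl 0
        · rw [Fintype.sum_sum_type]
          simp [hXdef, hx.2]
      have : innerF (maxGame G H) X = innerF G x := by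
        rw [innerF_maxGame]
        have hg : (fun b' => ∑ a', X (Sum.inr a') * H a' b') = fun _ => (0:ℝ) := by
          funext b'; simp [hXdef]
        rw [hg, Finset.inf'_const, add_zero]
        rfl
      rw [← this]
      exact le_matrixValue _ hXmem
    · refine matrixValue_le H fun x hx => ?_
      classical
      set X : A ⊕ A' → ℝ := Sum.elim (fun _ => 0) x with hXdef
      have hXmem : X ∈ stdSimplex ℝ (A ⊕ A') := by
        constructor
        · rintro (a | a')
          · exact le_refl 0
          · exact hx.1 a'
        · rw [Fintype.sum_sum_type]
          simp [hXdef, hx.2]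
      have : innerF (maxGame G H) X = innerF H x := by
        rw [innerF_maxGame]
        have hg : (fun b => ∑ a, X (Sum.inl a) * G a b) = fun _ => (0:ℝ) := by
          funext b; simp [hXdef]
        rw [hg, Finset.inf'_const, zero_add]
        rfl
      rw [← this]
      exact le_matrixValue _ hXmem

end MinMax

end Aux

lemma InV.add_poly {w : ℝ → ℝ} (hw : InV w) (p : Polynomial ℝ) :
    InV (fun z => w z + p.eval z) := by
  obtain ⟨A, B, iA, iB, hA, hB, G, hG⟩ := hw
  letI := iA; letI := iB; haveI := hA; haveI := hB
  refine ⟨A, B, iA, iB, hA, hB, fun a b => G a b + Polynomial.C (p.eval 0) + (p - Polynomial.C (p.eval 0)), fun z => ?_⟩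
  have he : (fun a b => (G a b + Polynomial.C (p.eval 0) + (p - Polynomial.C (p.eval 0))).eval z)
      = fun a b => (G a b).eval z + p.eval z := by
    funext a b
    simp only [Polynomial.eval_add, Polynomial.eval_sub, Polynomial.eval_C]
    ring
  rw [he, matrixValue_add_const]
  exact congrArg (· + p.eval z) (hG z)

lemma InV.min' {u v : ℝ → ℝ} (hu : InV u) (hv : InV v) :
    InV (fun z => min (u z) (v z)) := by
  obtain ⟨A, B, iA, iB, hA, hB, G, hG⟩ := hu
  obtain ⟨A', B', iA', iB', hA', hB', H, hH⟩ := hv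
  letI := iA; letI := iB; haveI := hA; haveI := hB
  letI := iA'; letI := iB'; haveI := hA'; haveI := hB'
  refine ⟨A × A', B ⊕ B', inferInstance, inferInstance, inferInstance, inferInstance,
    fun p q => Sum.elim (fun b => G p.1 b) (fun b' => H p.2 b') q, fun z => ?_⟩
  have he : (fun (p : A × A') (q : B ⊕ B') =>
        (Sum.elim (fun b => G p.1 b) (fun b' => H p.2 b') q).eval z)
      = minGame (fun a b => (G a b).eval z) (fun a' b' => (H a' b').eval z) := by
    funext p q; cases q <;> rfl
  rw [he, matrixValue_minGame]
  exact congrArg₂ Min.min (hG z) (hH z)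

lemma InV.max' {u v : ℝ → ℝ} (hu : InV u) (hv : InV v) :
    InV (fun z => max (u z) (v z)) := by
  obtain ⟨A, B, iA, iB, hA, hB, G, hG⟩ := hu
  obtain ⟨A', B', iA', iB', hA', hB', H, hH⟩ := hv
  letI := iA; letI := iB; haveI := hA; haveI := hB
  letI := iA'; letI := iB'; haveI := hA'; haveI := hB'
  refine ⟨A ⊕ A', B × B', inferInstance, inferInstance, inferInstance, inferInstance,
    fun p q => Sum.elim (fun a => G a q.1) (fun a' => H a' q.2) p, fun z => ?_⟩
  have he : (fun (p : A ⊕ A') (q : B × B') =>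
        (Sum.elim (fun a => G a q.1) (fun a' => H a' q.2) p).eval z)
      = maxGame (fun a b => (G a b).eval z) (fun a' b' => (H a' b').eval z) := by
    funext p q; cases p <;> rfl
  rw [he, matrixValue_maxGame]
  exact congrArg₂ Max.max (hG z) (hH z)

lemma poly_eval_sub (p : Polynomial ℝ) (z₀ : ℝ) :
    ∃ q : Polynomial ℝ, ∀ z, p.eval z - p.eval z₀ = (z - z₀) * q.eval z := by
  obtain ⟨q, hq⟩ := Polynomial.X_sub_C_dvd_sub_C_eval (a := z₀) (p := p)
  refine ⟨q, fun z => ?_⟩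
  have h := congrArg (Polynomial.eval z) hq
  simpa using h

lemma abs_le_sq_add_one (t : ℝ) : |t| ≤ t ^ 2 + 1 := by
  nlinarith [sq_nonneg (|t| - 1), abs_nonneg t, sq_abs t]

lemma value_diff_bound {A B : Type} [Fintype A] [Fintype B] [Nonempty A] [Nonempty B]
    (G : A → B → Polynomial ℝ) (z₀ : ℝ) :
    ∃ Q : Polynomial ℝ, (∀ z, 0 ≤ Q.eval z) ∧ ∀ z,
      |matrixValue (fun a b => (G a b).eval z) - matrixValue (fun a b => (G a b).eval z₀)|
        ≤ |z - z₀| * Q.eval z := by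
  choose q hq using fun a b => poly_eval_sub (G a b) z₀
  refine ⟨∑ a, ∑ b, ((q a b) ^ 2 + 1), ?_, ?_⟩
  · intro z
    rw [Polynomial.eval_finset_sum]
    refine Finset.sum_nonneg fun a _ => ?_
    rw [Polynomial.eval_finset_sum]
    refine Finset.sum_nonneg fun b _ => ?_
    simp only [Polynomial.eval_add, Polynomial.eval_pow, Polynomial.eval_one]
    positivity
  · intro z
    refine abs_matrixValue_sub_le fun a b => ?_
    rw [hq a b z, abs_mul]
    refine mul_le_mul_of_nonneg_left ?_ (abs_nonneg _)
    refine le_trans (abs_le_sq_add_one _) ?_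
    have h1 : (q a b).eval z ^ 2 + 1 = ((q a b) ^ 2 + 1 : Polynomial ℝ).eval z := by simp
    rw [h1, Polynomial.eval_finset_sum]
    calc ((q a b) ^ 2 + 1 : Polynomial ℝ).eval z
        ≤ ∑ b', ((q a b') ^ 2 + 1 : Polynomial ℝ).eval z :=
          Finset.single_le_sum (f := fun b' => ((q a b') ^ 2 + 1 : Polynomial ℝ).eval z)
            (fun b' _ => by simp only [Polynomial.eval_add, Polynomial.eval_pow,
              Polynomial.eval_one]; positivity) (Finset.mem_univ b)
      _ = (∑ b', ((q a b') ^ 2 + 1 : Polynomial ℝ)).eval z :=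
          (Polynomial.eval_finset_sum _ _ _).symm
      _ ≤ ∑ a', (∑ b', ((q a' b') ^ 2 + 1 : Polynomial ℝ)).eval z :=
          Finset.single_le_sum
            (f := fun a' => (∑ b', ((q a' b') ^ 2 + 1 : Polynomial ℝ)).eval z)
            (fun a' _ => by
              show (0:ℝ) ≤ Polynomial.eval z (∑ b', (q a' b' ^ 2 + 1))
              rw [Polynomial.eval_finset_sum]
              refine Finset.sum_nonneg fun b' _ => by
                simp only [Polynomial.eval_add, Polynomial.eval_pow, Polynomial.eval_one]
                positivity)
            (Finset.mem_univ a)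

/-- If `u` and `w` are value functions of polynomial games and `u z₀ = w z₀` for some
`z₀ ∈ ℝ`, then the function equal to `u` on `(-∞, z₀]` and to `w` on `(z₀, ∞)` is also
the value function of some polynomial game. -/
theorem InV.glue (u w : ℝ → ℝ) (hu : InV u) (hw : InV w) (z₀ : ℝ) (h₀ : u z₀ = w z₀) :
    InV (fun z => if z ≤ z₀ then u z else w z) := by
  obtain ⟨A, B, iA, iB, hA, hB, G, hG⟩ := id hu
  obtain ⟨A', B', iA', iB', hA', hB', H, hH⟩ := id hw
  letI := iA; letI := iB; haveI := hA; haveI := hB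
  letI := iA'; letI := iB'; haveI := hA'; haveI := hB'
  obtain ⟨Qu, hQu0, hQu⟩ := value_diff_bound G z₀
  obtain ⟨Qw, hQw0, hQw⟩ := value_diff_bound H z₀
  set Qt : Polynomial ℝ := Qu + Qw with hQt
  have hQt0 : ∀ z, 0 ≤ Qt.eval z := fun z => by
    rw [hQt, Polynomial.eval_add]; exact add_nonneg (hQu0 z) (hQw0 z)
  have hd : ∀ z, |u z - w z| ≤ |z - z₀| * Qt.eval z := by
    intro z
    have h1 : |u z - u z₀| ≤ |z - z₀| * Qu.eval z := by rw [hG z, hG z₀]; exact hQu z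
    have h2 : |w z - w z₀| ≤ |z - z₀| * Qw.eval z := by rw [hH z, hH z₀]; exact hQw z
    have h3 : u z - w z = (u z - u z₀) - (w z - w z₀) := by rw [h₀]; ring
    rw [h3, hQt, Polynomial.eval_add, mul_add]
    exact le_trans (abs_sub _ _) (add_le_add h1 h2)
  set s : Polynomial ℝ := (Polynomial.X - Polynomial.C z₀) * Qt with hs
  have hseval : ∀ z, s.eval z = (z - z₀) * Qt.eval z := fun z => by rw [hs]; simp
  have hV : InV (fun z => min (max (u z) (w z + s.eval z)) (max (w z + (-s).eval z) (w z))) :=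
    InV.min' (InV.max' hu (hw.add_poly s)) (InV.max' (hw.add_poly (-s)) hw)
  have hfun : (fun z => if z ≤ z₀ then u z else w z)
      = fun z => min (max (u z) (w z + s.eval z)) (max (w z + (-s).eval z) (w z)) := by
    funext z
    have hdz := abs_le.mp (hd z)
    have hneg : (-s).eval z = -((z - z₀) * Qt.eval z) := by
      rw [Polynomial.eval_neg, hseval]
    rw [hseval, hneg]
    by_cases hz : z ≤ z₀
    · rw [if_pos hz]
      have habs : |z - z₀| * Qt.eval z = -((z - z₀) * Qt.eval z) := by
        rw [abs_of_nonpos (by linarith : z - z₀ ≤ 0)]; ring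
      rw [habs] at hdz
      have e1 : max (u z) (w z + (z - z₀) * Qt.eval z) = u z :=
        max_eq_left (by linarith [hdz.1])
      have e2 : max (w z + -((z - z₀) * Qt.eval z)) (w z) = w z + -((z - z₀) * Qt.eval z) := by
        have ht0 : (z - z₀) * Qt.eval z ≤ 0 :=
          mul_nonpos_of_nonpos_of_nonneg (by linarith) (hQt0 z)
        exact max_eq_left (by linarith)
      rw [e1, e2]
      exact (min_eq_left (by linarith [hdz.2])).symm
    · rw [if_neg hz]
      push_neg at hz
      have habs : |z - z₀| * Qt.eval z = (z - z₀) * Qt.eval z := by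
        rw [abs_of_nonneg (by linarith : (0:ℝ) ≤ z - z₀)]
      rw [habs] at hdz
      have ht0 : 0 ≤ (z - z₀) * Qt.eval z := mul_nonneg (by linarith) (hQt0 z)
      have e1 : max (u z) (w z + (z - z₀) * Qt.eval z) = w z + (z - z₀) * Qt.eval z :=
        max_eq_right (by linarith [hdz.2])
      have e2 : max (w z + -((z - z₀) * Qt.eval z)) (w z) = w z :=
        max_eq_right (by linarith)
      rw [e1, e2]
      exact (min_eq_right (by linarith)).symm
  rw [hfun]
  exact hV
end

section
/- Let û, ŵ : ℝ → ℝ be functions such that on a neighborhood of 0 each is given by a rational function (a quotient of real polynomials with nonvanishing denominator there), and suppose û and ŵ are defined on all of ℝ as continuous piecewise rational functions with û(0) = ŵ(0) = 0. Then there exist a real constant c > 0 and a natural number N such that û(z) ≥ c·z + z^{2N+1} for every z ≤ 0 and ŵ(z) ≤ c·z + z^{2N+1} for every z ≥ 0. -/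
open Polynomial Filter

/-- `u` is piecewise rational: there are `K + 2` points
`⊥ = h 0 < h 1 < ⋯ < h (K+1) = ⊤` (the interior ones being real) and rational functions
`Q k / R k` with `R k` nonvanishing on `(h k, h (k+1))`, such that `u = Q k / R k` there. -/
def PiecewiseRational (u : ℝ → ℝ) : Prop :=
  ∃ (K : ℕ) (h : Fin (K + 2) → EReal) (Q R : Fin (K + 1) → Polynomial ℝ),
    StrictMono h ∧ h 0 = ⊥ ∧ h (Fin.last (K + 1)) = ⊤ ∧
    ∀ (k : Fin (K + 1)) (z : ℝ), h k.castSucc < (z : EReal) → (z : EReal) < h k.succ →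
      (R k).eval z ≠ 0 ∧ u z = (Q k).eval z / (R k).eval z

lemma pr_reflect {u : ℝ → ℝ} (hu : PiecewiseRational u) :
    PiecewiseRational (fun z => -u (-z)) := by
  obtain ⟨K, h, Q, R, hmono, h0, hlast, hQR⟩ := hu
  refine ⟨K, fun i => -h i.rev, fun k => -((Q k.rev).comp (-X)), fun k => (R k.rev).comp (-X),
    ?_, ?_, ?_, ?_⟩
  · intro i j hij
    exact EReal.neg_lt_neg_iff.mpr (hmono (Fin.rev_lt_rev.mpr hij))
  · simp [Fin.rev_zero, hlast]
  · simp [Fin.rev_last, h0]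
  · intro k z h1 h2
    simp only [Fin.rev_castSucc] at h1
    simp only [Fin.rev_succ] at h2
    have hz1 : h (k.rev.castSucc) < ((-z : ℝ) : EReal) := by
      rw [EReal.coe_neg]; exact EReal.lt_neg_comm.mp h2
    have hz2 : ((-z : ℝ) : EReal) < h (k.rev.succ) := by
      rw [EReal.coe_neg]; exact EReal.neg_lt_comm.mp h1
    obtain ⟨hR, hval⟩ := hQR k.rev (-z) hz1 hz2
    constructor
    · simpa [eval_comp] using hR
    · simp only [eval_neg, eval_comp, eval_neg, eval_X, hval, neg_div]

lemma lemW (w : ℝ → ℝ) (hwcont : Continuous w) (hpr : PiecewiseRational w) (h0 : w 0 = 0)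
    (hloc : ∃ (P R : Polynomial ℝ) (δ : ℝ), 0 < δ ∧
      ∀ z : ℝ, |z| < δ → R.eval z ≠ 0 ∧ w z = P.eval z / R.eval z) :
    ∃ (c₀ : ℝ) (N₀ : ℕ), 1 ≤ c₀ ∧ 1 ≤ N₀ ∧
      ∀ c, c₀ ≤ c → ∀ N, N₀ ≤ N → ∀ z : ℝ, 0 ≤ z → w z ≤ c * z + z ^ (2 * N + 1) := by
  obtain ⟨K, h, Q, R, hmono, hh0, hhlast, hQR⟩ := hpr
  set QQ := Q (Fin.last K) with hQQ
  set RR := R (Fin.last K) with hRR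
  -- last piece: beyond m₁
  have hcslt : h ((Fin.last K).castSucc) < ⊤ := by
    rw [← hhlast]
    exact hmono (Fin.castSucc_lt_last _)
  obtain ⟨m₁, hm₁, -⟩ := EReal.lt_iff_exists_real_btwn.mp hcslt
  have hfar : ∀ z : ℝ, m₁ < z → RR.eval z ≠ 0 ∧ w z = QQ.eval z / RR.eval z := by
    intro z hz
    refine hQR (Fin.last K) z (lt_trans hm₁ ?_) ?_
    · exact_mod_cast hz
    · rw [Fin.succ_last, hhlast]; exact lt_of_le_of_ne le_top (EReal.coe_ne_top z)
  have hRRne : RR ≠ 0 := fun hc => (hfar (m₁ + 1) (by linarith)).1 (by rw [hc]; simp)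
  -- the comparison polynomial
  set N₀ := QQ.natDegree + RR.natDegree + 1 with hN₀
  set S : Polynomial ℝ := X ^ (2 * N₀ + 1) + X with hS
  set A : Polynomial ℝ := S * RR - QQ with hA
  have hdegX : (X : ℝ[X]).degree < ((2 * N₀ + 1 : ℕ) : WithBot ℕ) := by
    rw [degree_X]; exact_mod_cast (by omega : 1 < 2 * N₀ + 1)
  have hmonicS : S.Monic := monic_X_pow_add hdegX
  have hSne : S ≠ 0 := hmonicS.ne_zero
  have hdegS : S.degree = ((2 * N₀ + 1 : ℕ) : WithBot ℕ) := by
    rw [hS, degree_add_eq_left_of_degree_lt (by rwa [degree_X_pow]), degree_X_pow]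
  have hdegSR : (S * RR).degree = ((2 * N₀ + 1 + RR.natDegree : ℕ) : WithBot ℕ) := by
    rw [degree_mul, hdegS, degree_eq_natDegree hRRne]
    exact_mod_cast (Nat.cast_add _ _).symm
  have hdeglt : QQ.degree < (S * RR).degree := by
    rw [hdegSR]
    calc QQ.degree ≤ (QQ.natDegree : WithBot ℕ) := degree_le_natDegree
      _ < _ := by exact_mod_cast (by omega : QQ.natDegree < 2 * N₀ + 1 + RR.natDegree)
  have hdegA : A.degree = (S * RR).degree := by
    rw [hA, sub_eq_add_neg, add_comm, degree_add_eq_right_of_degree_lt (by rwa [degree_neg])]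
  have hlcA : A.leadingCoeff = RR.leadingCoeff := by
    rw [hA, sub_eq_add_neg, add_comm, leadingCoeff_add_of_degree_lt (by rwa [degree_neg]),
      leadingCoeff_mul, hmonicS.leadingCoeff, one_mul]
  have htend : Tendsto (fun x => eval x A / eval x RR) atTop atTop := by
    refine div_tendsto_atTop_of_degree_gt A RR ?_ hRRne ?_
    · rw [hdegA, hdegSR, degree_eq_natDegree hRRne]
      exact_mod_cast (by omega : RR.natDegree < 2 * N₀ + 1 + RR.natDegree)
    · rw [hlcA, div_self (leadingCoeff_ne_zero.mpr hRRne)]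
      norm_num
  obtain ⟨M, hM⟩ := eventually_atTop.mp (htend.eventually_ge_atTop 0)
  -- near zero
  obtain ⟨P, Rl, δ, hδ, hPR⟩ := hloc
  have hR0 := hPR 0 (by simpa using hδ)
  have hP0 : P.eval 0 = 0 := by
    have := hR0.2
    rw [h0, eq_comm, _root_.div_eq_zero_iff] at this
    tauto
  set g : ℝ → ℝ := fun z => (P.divX).eval z / Rl.eval z with hg
  have hwg : ∀ z : ℝ, |z| < δ → w z = z * g z := by
    intro z hz
    obtain ⟨hRne, hwz⟩ := hPR z hz
    have hPz : P.eval z = z * (P.divX).eval z := by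
      conv_lhs => rw [← X_mul_divX_add P]
      rw [coeff_zero_eq_eval_zero, hP0]
      simp [mul_comm]
    rw [hwz, hPz, hg, mul_div_assoc]
  -- bound of g on [0, δ/2]
  have hgc : ContinuousOn g (Set.Icc 0 (δ / 2)) := by
    apply ContinuousOn.div (P.divX.continuous).continuousOn (Rl.continuous).continuousOn
    intro x hx
    exact (hPR x (by rw [abs_of_nonneg hx.1]; linarith [hx.2])).1
  obtain ⟨x₀, -, hx₀'⟩ := isCompact_Icc.exists_isMaxOn ⟨0, by constructor <;> linarith⟩ hgc
  have hx₀ := isMaxOn_iff.mp hx₀'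
  set G : ℝ := max (g x₀) 0 with hG
  -- bound of w on [0, m₂]
  set m₂ : ℝ := max (max (m₁ + 1) M) 1 with hm₂
  obtain ⟨x₁, -, hx₁'⟩ := isCompact_Icc.exists_isMaxOn
    (⟨0, by constructor <;> [rfl; positivity]⟩ : (Set.Icc (0:ℝ) m₂).Nonempty)
    hwcont.continuousOn
  have hx₁ := isMaxOn_iff.mp hx₁'
  set B : ℝ := max (w x₁) 0 with hB
  refine ⟨max (max G (2 * B / δ)) 1, N₀, le_max_right _ _, by omega, ?_⟩
  intro c hc N hN z hz
  have hc1 : (1:ℝ) ≤ c := le_trans (le_max_right _ _) hc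
  have hcG : G ≤ c := le_trans (le_trans (le_max_left _ _) (le_max_left _ _)) hc
  have hcB : 2 * B / δ ≤ c := le_trans (le_trans (le_max_right _ _) (le_max_left _ _)) hc
  rcases le_or_gt z (δ / 2) with hz1 | hz1
  · -- near zero
    have habs : |z| < δ := by rw [abs_of_nonneg hz]; linarith
    have : w z = z * g z := hwg z habs
    have hgz : g z ≤ G := le_trans (hx₀ z ⟨hz, hz1⟩) (le_max_left _ _)
    have h1 : w z ≤ c * z := by
      rw [this, mul_comm c z]
      exact mul_le_mul_of_nonneg_left (le_trans hgz hcG) hz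
    have h2 : (0:ℝ) ≤ z ^ (2 * N + 1) := by positivity
    linarith
  · rcases le_or_gt z m₂ with hz2 | hz2
    · -- middle
      have hwB : w z ≤ B := le_trans (hx₁ z ⟨hz, hz2⟩) (le_max_left _ _)
      have hBc : B ≤ c * (δ / 2) := by
        have := mul_le_mul_of_nonneg_right hcB (le_of_lt (show (0:ℝ) < δ/2 by linarith))
        calc B = 2 * B / δ * (δ / 2) := by field_simp
          _ ≤ c * (δ / 2) := this
      have h1 : c * (δ / 2) ≤ c * z := mul_le_mul_of_nonneg_left (le_of_lt hz1) (by linarith)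
      have h2 : (0:ℝ) ≤ z ^ (2 * N + 1) := by positivity
      linarith
    · -- far
      have h1m : m₁ + 1 ≤ m₂ := le_trans (le_max_left _ _) (le_max_left _ _)
      have hMm : M ≤ m₂ := le_trans (le_max_right _ _) (le_max_left _ _)
      have h1m' : (1:ℝ) ≤ m₂ := le_max_right _ _
      have hzm₁ : m₁ < z := by linarith
      have hzM : M ≤ z := by linarith
      have hz1' : (1:ℝ) ≤ z := by linarith
      obtain ⟨hRne, hwz⟩ := hfar z hzm₁
      have h0le := hM z hzM
      have hAz : eval z A = eval z S * eval z RR - eval z QQ := by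
        rw [hA]; simp
      rw [hAz, sub_div, mul_div_assoc, div_self hRne, mul_one] at h0le
      have hwS : w z ≤ eval z S := by rw [hwz]; linarith
      have hSz : eval z S = z ^ (2 * N₀ + 1) + z := by simp [hS]
      have hp : z ^ (2 * N₀ + 1) ≤ z ^ (2 * N + 1) := pow_le_pow_right₀ hz1' (by omega)
      have hcz : z ≤ c * z := le_mul_of_one_le_left hz hc1
      linarith

/-- If `û` and `ŵ` are continuous piecewise rational functions on `ℝ`, each given by a
rational function on a neighborhood of `0`, with `û 0 = ŵ 0 = 0`, then there exist `c > 0`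
and `N ∈ ℕ` with `û z ≥ c * z + z ^ (2 * N + 1)` for all `z ≤ 0` and
`ŵ z ≤ c * z + z ^ (2 * N + 1)` for all `z ≥ 0`. -/
theorem exists_separating_odd_polynomial (u w : ℝ → ℝ)
    (hucont : Continuous u) (hupr : PiecewiseRational u)
    (hwcont : Continuous w) (hwpr : PiecewiseRational w)
    (hu0 : u 0 = 0) (hw0 : w 0 = 0)
    (huloc : ∃ (P R : Polynomial ℝ) (δ : ℝ), 0 < δ ∧
      ∀ z : ℝ, |z| < δ → R.eval z ≠ 0 ∧ u z = P.eval z / R.eval z)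
    (hwloc : ∃ (P R : Polynomial ℝ) (δ : ℝ), 0 < δ ∧
      ∀ z : ℝ, |z| < δ → R.eval z ≠ 0 ∧ w z = P.eval z / R.eval z) :
    ∃ (c : ℝ) (N : ℕ), 0 < c ∧
      (∀ z : ℝ, z ≤ 0 → c * z + z ^ (2 * N + 1) ≤ u z) ∧
      (∀ z : ℝ, 0 ≤ z → w z ≤ c * z + z ^ (2 * N + 1)) := by
  obtain ⟨cw, Nw, hcw1, hNw1, hw⟩ := lemW w hwcont hwpr hw0 hwloc
  have huloc' : ∃ (P R : Polynomial ℝ) (δ : ℝ), 0 < δ ∧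
      ∀ z : ℝ, |z| < δ → R.eval z ≠ 0 ∧ (fun z => -u (-z)) z = P.eval z / R.eval z := by
    obtain ⟨P, R, δ, hδ, hPR⟩ := huloc
    refine ⟨-(P.comp (-X)), R.comp (-X), δ, hδ, fun z hz => ?_⟩
    obtain ⟨hRne, hval⟩ := hPR (-z) (by rwa [abs_neg])
    constructor
    · simpa [eval_comp] using hRne
    · simp only [eval_neg, eval_comp, eval_X, hval, neg_div]
  obtain ⟨cu, Nu, hcu1, hNu1, hu⟩ := lemW (fun z => -u (-z))
    ((hucont.comp continuous_neg).neg) (pr_reflect hupr) (by simp [hu0]) huloc'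
  refine ⟨max cu cw, max Nu Nw, by positivity, ?_, ?_⟩
  · intro z hz
    have := hu (max cu cw) (le_max_left _ _) (max Nu Nw) (le_max_left _ _) (-z) (by linarith)
    simp only [neg_neg] at this
    have hodd : (-z) ^ (2 * max Nu Nw + 1) = -(z ^ (2 * max Nu Nw + 1)) :=
      Odd.neg_pow ⟨max Nu Nw, by ring⟩ z
    rw [hodd] at this
    linarith
  · intro z hz
    exact hw (max cu cw) (le_max_right _ _) (max Nu Nw) (le_max_right _ _) z hz
end

section
/- Let u, w : ℝ → ℝ be continuous piecewise rational functions and z₀ ∈ ℝ with u(z₀) = w(z₀). Then there exist real polynomials P and Q such that: u(z) ≥ P(z) for every z ≤ z₀; u(z) ≤ P(z) and w(z) ≤ P(z) for every z ≥ z₀; u(z) ≤ Q(z) and w(z) ≤ Q(z) for every z ≤ z₀; and w(z) ≥ Q(z) for every z ≥ z₀. Consequently, the function v defined by v(z) = u(z) for z ≤ z₀ and v(z) = w(z) for z > z₀ satisfies v = min{max{u, P}, max{w, Q}} pointwise on ℝ. -/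
open Polynomial

open Filter


private lemma one_le_base (z : ℝ) : (1:ℝ) ≤ 1 + z^2 := by nlinarith [sq_nonneg z]

private lemma abs_le_base (z : ℝ) : |z| ≤ 1 + z^2 := by
  rcases abs_cases z with ⟨h, _⟩ | ⟨h, _⟩ <;> nlinarith [sq_nonneg (z-1), sq_nonneg (z+1)]

private lemma base_pow_mono (z : ℝ) {m n : ℕ} (h : m ≤ n) : (1+z^2)^m ≤ (1+z^2)^n :=
  pow_le_pow_right₀ (one_le_base z) h

private lemma poly_growth (p : ℝ[X]) :
    ∃ M : ℝ, 0 ≤ M ∧ ∀ z : ℝ, |p.eval z| ≤ M * (1+z^2)^p.natDegree := by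
  refine ⟨∑ i ∈ Finset.range (p.natDegree + 1), |p.coeff i|,
    Finset.sum_nonneg fun _ _ => abs_nonneg _, fun z => ?_⟩
  rw [Polynomial.eval_eq_sum_range, Finset.sum_mul]
  refine (Finset.abs_sum_le_sum_abs _ _).trans (Finset.sum_le_sum fun i hi => ?_)
  rw [abs_mul, abs_pow]
  have h1 : |z|^i ≤ (1+z^2)^p.natDegree := by
    calc |z|^i ≤ (1+z^2)^i := pow_le_pow_left₀ (abs_nonneg z) (abs_le_base z) i
    _ ≤ _ := base_pow_mono z (by have := Finset.mem_range.1 hi; omega)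
  exact mul_le_mul_of_nonneg_left h1 (abs_nonneg _)

private lemma ray_bound (f : ℝ → ℝ) (Q R : ℝ[X]) (T : ℝ)
    (hf : ∀ z : ℝ, T < z → R.eval z ≠ 0 ∧ f z = Q.eval z / R.eval z) :
    ∃ (M : ℝ) (n : ℕ) (T' : ℝ), 0 ≤ M ∧ T < T' ∧
      ∀ z : ℝ, T' ≤ z → |f z| ≤ M * (1+z^2)^n := by
  have hR1 := (hf (T+1) (by linarith)).1
  have hRne : R ≠ 0 := fun h => hR1 (by simp [h])
  obtain ⟨T', c, hTT', hc, hRc⟩ : ∃ T' c : ℝ, T < T' ∧ 0 < c ∧ ∀ z, T' ≤ z → c ≤ |R.eval z| := by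
    rcases Nat.eq_zero_or_pos R.natDegree with h0 | h0
    · obtain ⟨r, rfl⟩ : ∃ r, R = C r := ⟨R.coeff 0, Polynomial.eq_C_of_natDegree_eq_zero h0⟩
      exact ⟨T+1, |r|, by linarith, abs_pos.2 (by simpa using hR1), fun z _ => by simp⟩
    · have hdeg : 0 < R.degree := Polynomial.natDegree_pos_iff_degree_pos.1 h0
      obtain ⟨a, ha⟩ := Filter.eventually_atTop.1
        ((Polynomial.abs_tendsto_atTop R hdeg).eventually_ge_atTop 1)
      exact ⟨max a (T+1), 1, lt_of_lt_of_le (by linarith) (le_max_right _ _), one_pos,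
        fun z hz => ha z (le_trans (le_max_left _ _) hz)⟩
  obtain ⟨MQ, hMQ, hQb⟩ := poly_growth Q
  refine ⟨MQ / c, Q.natDegree, T', div_nonneg hMQ hc.le, hTT', fun z hz => ?_⟩
  obtain ⟨hRz, hfz⟩ := hf z (lt_of_lt_of_le hTT' hz)
  rw [hfz, abs_div, div_mul_eq_mul_div]
  calc |Q.eval z| / |R.eval z| ≤ |Q.eval z| / c := by
        apply div_le_div_of_nonneg_left (abs_nonneg _) hc (hRc z hz)
    _ ≤ MQ * (1+z^2)^Q.natDegree / c := by
        gcongr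
        exact hQb z


private lemma right_lip (f : ℝ → ℝ) (Q R : ℝ[X]) (z₀ b : ℝ) (hb : z₀ < b)
    (hf : ∀ z : ℝ, z₀ < z → z < b → R.eval z ≠ 0 ∧ f z = Q.eval z / R.eval z)
    (hcont : ContinuousAt f z₀) :
    ∃ δ L : ℝ, 0 < δ ∧ 0 ≤ L ∧ ∀ z : ℝ, z₀ < z → z < z₀ + δ → |f z - f z₀| ≤ L * (z - z₀) := by
  set c := f z₀ with hc
  set g : ℝ[X] := Q - C c * R with hgdef
  have key : ∀ z : ℝ, z₀ < z → z < b → f z - c = g.eval z / R.eval z := by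
    intro z h1 h2
    obtain ⟨hR, hfz⟩ := hf z h1 h2
    rw [hfz, hgdef]
    field_simp
    simp only [eval_sub, eval_mul, eval_C]; ring
  by_cases hg0 : g = 0
  · refine ⟨b - z₀, 0, by linarith, le_refl 0, fun z h1 h2 => ?_⟩
    have h3 := key z h1 (by linarith)
    rw [hg0] at h3
    simp at h3
    simp [h3]
  have hRne : R ≠ 0 := by
    obtain ⟨zm, hzm1, hzm2⟩ := exists_between hb
    exact fun h => (hf zm hzm1 hzm2).1 (by simp [h])
  set a := R.rootMultiplicity z₀ with hadef
  set m := g.rootMultiplicity z₀ with hmdef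
  set R₁ := R /ₘ (X - C z₀)^a with hR₁def
  set g₁ := g /ₘ (X - C z₀)^m with hg₁def
  have hRfact : (X - C z₀)^a * R₁ = R := R.pow_mul_divByMonic_rootMultiplicity_eq z₀
  have hgfact : (X - C z₀)^m * g₁ = g := g.pow_mul_divByMonic_rootMultiplicity_eq z₀
  have hR₁0 : R₁.eval z₀ ≠ 0 := Polynomial.eval_divByMonic_pow_rootMultiplicity_ne_zero z₀ hRne
  have hg₁0 : g₁.eval z₀ ≠ 0 := Polynomial.eval_divByMonic_pow_rootMultiplicity_ne_zero z₀ hg0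
  have key2 : ∀ z : ℝ, z₀ < z → z < b →
      f z - c = (z - z₀)^m * g₁.eval z / ((z - z₀)^a * R₁.eval z) := by
    intro z h1 h2
    rw [key z h1 h2, ← hRfact, ← hgfact]
    simp [Polynomial.eval_mul, Polynomial.eval_pow]
  have hR₁ne : ∀ z : ℝ, z₀ < z → z < b → R₁.eval z ≠ 0 := by
    intro z h1 h2
    have h3 := (hf z h1 h2).1
    rw [← hRfact] at h3
    simp only [Polynomial.eval_mul] at h3
    exact fun h => h3 (by simp [h])
  have ham : a + 1 ≤ m := by
    by_contra hcon
    push_neg at hcon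
    obtain ⟨e, he⟩ : ∃ e, a = m + e := ⟨a - m, by omega⟩
    have hform : ∀ z : ℝ, z₀ < z → z < b →
        g₁.eval z / R₁.eval z = (f z - c) * (z - z₀)^e := by
      intro z h1 h2
      have hz0 : z - z₀ ≠ 0 := sub_ne_zero.2 h1.ne'
      rw [key2 z h1 h2, he, pow_add]
      field_simp [hR₁ne z h1 h2]
    have hlim1 : Tendsto (fun z => g₁.eval z / R₁.eval z) (nhdsWithin z₀ (Set.Ioi z₀))
        (nhds (g₁.eval z₀ / R₁.eval z₀)) :=
      ((g₁.continuous.continuousAt.div R₁.continuous.continuousAt hR₁0)).continuousWithinAt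
    have hlim2 : Tendsto (fun z => f z - c) (nhdsWithin z₀ (Set.Ioi z₀)) (nhds 0) := by
      have h := (hcont.tendsto.sub_const c).mono_left
        (nhdsWithin_le_nhds (s := Set.Ioi z₀))
      simpa [hc] using h
    have hbound : ∀ᶠ z in nhdsWithin z₀ (Set.Ioi z₀),
        ‖g₁.eval z / R₁.eval z‖ ≤ |f z - c| := by
      filter_upwards [self_mem_nhdsWithin,
        eventually_nhdsWithin_of_eventually_nhds
          (eventually_lt_nhds (lt_min hb (by linarith : z₀ < z₀ + 1)))] with z h1 h2
      have h1' : z₀ < z := h1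
      have hzb : z < b := lt_of_lt_of_le h2 (min_le_left _ _)
      have hz1 : z - z₀ < 1 := by
        have := lt_of_lt_of_le h2 (min_le_right _ _); linarith
      rw [hform z h1' hzb, Real.norm_eq_abs, abs_mul, abs_pow]
      have : |z - z₀|^e ≤ 1 :=
        pow_le_one₀ (abs_nonneg _) (by rw [abs_of_pos (by linarith : (0:ℝ) < z - z₀)]; linarith)
      calc |f z - c| * |z - z₀|^e ≤ |f z - c| * 1 :=
            mul_le_mul_of_nonneg_left this (abs_nonneg _)
        _ = |f z - c| := mul_one _
    have hzero : Tendsto (fun z => g₁.eval z / R₁.eval z) (nhdsWithin z₀ (Set.Ioi z₀)) (nhds 0) :=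
      squeeze_zero_norm' hbound (by simpa using hlim2.abs)
    have := tendsto_nhds_unique hlim1 hzero
    exact hg₁0 (by
      rcases div_eq_zero_iff.1 this with h | h
      · exact h
      · exact absurd h hR₁0)
  obtain ⟨e, he⟩ : ∃ e, m = a + 1 + e := ⟨m - (a+1), by omega⟩
  have hform : ∀ z : ℝ, z₀ < z → z < b →
      f z - c = (z - z₀) * ((z - z₀)^e * (g₁.eval z / R₁.eval z)) := by
    intro z h1 h2
    have hz0 : z - z₀ ≠ 0 := sub_ne_zero.2 h1.ne'
    rw [key2 z h1 h2, he, pow_add, pow_add]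
    field_simp [hR₁ne z h1 h2]
  -- δ₁ from continuity of R₁
  have hcR : ContinuousAt (fun z => R₁.eval z) z₀ := R₁.continuous.continuousAt
  obtain ⟨δ₁, hδ₁, hRδ⟩ : ∃ δ₁ > 0, ∀ z : ℝ, |z - z₀| < δ₁ → |R₁.eval z₀|/2 ≤ |R₁.eval z| := by
    have h2 : 0 < |R₁.eval z₀|/2 := by positivity
    obtain ⟨δ₁, hδ₁, hδ⟩ := Metric.continuousAt_iff.1 hcR (|R₁.eval z₀|/2) h2
    refine ⟨δ₁, hδ₁, fun z hz => ?_⟩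
    have := hδ (show dist z z₀ < δ₁ by rwa [Real.dist_eq])
    rw [Real.dist_eq] at this
    have habs := abs_sub_abs_le_abs_sub (R₁.eval z₀) (R₁.eval z)
    rw [abs_sub_comm] at habs
    linarith
  obtain ⟨Mg, hMg⟩ := (isCompact_Icc (a := z₀) (b := z₀ + 1)).exists_bound_of_continuousOn
    g₁.continuous.continuousOn
  have hMg0 : 0 ≤ Mg := le_trans (norm_nonneg _) (hMg z₀ ⟨le_refl _, by linarith⟩)
  set L := Mg / (|R₁.eval z₀|/2) with hL
  have hL0 : 0 ≤ L := div_nonneg hMg0 (by positivity)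
  refine ⟨min (min δ₁ 1) (b - z₀), L, lt_min (lt_min hδ₁ one_pos) (by linarith), hL0, fun z h1 h2 => ?_⟩
  have hzb : z < b := by
    have := lt_of_lt_of_le h2 (by apply add_le_add_right (min_le_right _ _)); linarith
  have hzδ₁ : z - z₀ < δ₁ := by
    have := lt_of_lt_of_le h2 (add_le_add_right ((min_le_left _ _).trans (min_le_left _ _)) z₀)
    linarith
  have hz1 : z - z₀ < 1 := by
    have := lt_of_lt_of_le h2 (add_le_add_right ((min_le_left _ _).trans (min_le_right _ _)) z₀)
    linarith
  have hzpos : 0 < z - z₀ := by linarith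
  rw [hform z h1 hzb, abs_mul, abs_mul, abs_div, abs_pow,
    abs_of_pos hzpos, mul_comm L (z - z₀)]
  apply mul_le_mul_of_nonneg_left _ hzpos.le
  have hpe : (z - z₀)^e ≤ 1 := pow_le_one₀ hzpos.le (by linarith)
  have hgb : |g₁.eval z| ≤ Mg := by
    have := hMg z ⟨by linarith, by linarith⟩
    rwa [Real.norm_eq_abs] at this
  have hRb : |R₁.eval z₀|/2 ≤ |R₁.eval z| := hRδ z (by rw [abs_of_pos hzpos]; linarith)
  have hdiv : |g₁.eval z| / |R₁.eval z| ≤ L := by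
    rw [hL]
    apply div_le_div₀ hMg0 hgb (by positivity) hRb
  calc (z - z₀)^e * (|g₁.eval z| / |R₁.eval z|) ≤ 1 * L :=
      mul_le_mul hpe hdiv (by positivity) zero_le_one
    _ = L := one_mul _

private lemma global_bound (u : ℝ → ℝ) (hc : Continuous u) (hpr : PiecewiseRational u) :
    ∃ (M : ℝ) (n : ℕ), 0 ≤ M ∧ ∀ z : ℝ, |u z| ≤ M * (1+z^2)^n := by
  obtain ⟨K, h, Q, R, hmono, hbot, htop, hpiece⟩ := hpr
  have h1top : h ((Fin.last K).castSucc) < ⊤ := by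
    rw [← htop]
    exact hmono (by simp [Fin.lt_def])
  obtain ⟨t, ht, -⟩ := EReal.lt_iff_exists_real_btwn.1 h1top
  have hbot1 : (⊥ : EReal) < h ((0 : Fin (K+1)).succ) := by
    rw [← hbot]
    exact hmono (by simp [Fin.lt_def])
  obtain ⟨s, -, hs⟩ := EReal.lt_iff_exists_real_btwn.1 hbot1
  set T : ℝ := max (max t (-s)) 0 with hT
  have hright : ∀ z : ℝ, T < z → (R (Fin.last K)).eval z ≠ 0 ∧
      u z = (Q (Fin.last K)).eval z / (R (Fin.last K)).eval z := by
    intro z hz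
    refine hpiece (Fin.last K) z ?_ ?_
    · refine lt_trans ht ?_
      exact_mod_cast EReal.coe_lt_coe_iff.2 (by
        have : t ≤ T := le_trans (le_max_left _ _) (le_max_left _ _)
        linarith)
    · rw [Fin.succ_last, htop]
      exact EReal.coe_lt_top z
  have hleft : ∀ z : ℝ, T < z → ((R 0).comp (-X)).eval z ≠ 0 ∧
      u (-z) = ((Q 0).comp (-X)).eval z / ((R 0).comp (-X)).eval z := by
    intro z hz
    have hzs : (-z : ℝ) < s := by
      have : -s ≤ T := le_trans (le_max_right _ _) (le_max_left _ _)
      linarith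
    have h2 := hpiece 0 (-z) (by
        rw [show ((0 : Fin (K+1)).castSucc) = 0 from rfl, hbot]
        exact bot_lt_iff_ne_bot.2 (EReal.coe_ne_bot _))
      (lt_trans (EReal.coe_lt_coe_iff.2 hzs) hs)
    simpa [Polynomial.eval_comp] using h2
  obtain ⟨M₁, n₁, T₁, hM₁, hTT₁, hb₁⟩ := ray_bound u _ _ T hright
  obtain ⟨M₂, n₂, T₂, hM₂, hTT₂, hb₂⟩ := ray_bound (fun z => u (-z)) _ _ T hleft
  obtain ⟨M₃, hb₃⟩ := (isCompact_Icc (a := -T₂) (b := T₁)).exists_bound_of_continuousOn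
    hc.continuousOn
  refine ⟨max (max M₁ M₂) (max M₃ 0), max n₁ n₂, by positivity, fun z => ?_⟩
  have hbase1 : (1:ℝ) ≤ (1+z^2)^(max n₁ n₂) :=
    one_le_pow₀ (by nlinarith [sq_nonneg z])
  have hbnn : (0:ℝ) ≤ (1+z^2)^(max n₁ n₂) := by positivity
  rcases le_or_gt T₁ z with hz | hz
  · calc |u z| ≤ M₁ * (1+z^2)^n₁ := hb₁ z hz
      _ ≤ max (max M₁ M₂) (max M₃ 0) * (1+z^2)^(max n₁ n₂) := by
        apply mul_le_mul (le_trans (le_max_left _ _) (le_max_left _ _))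
          (base_pow_mono z (le_max_left _ _)) (by positivity) (by positivity)
  rcases le_or_gt z (-T₂) with hz2 | hz2
  · have h4 := hb₂ (-z) (by linarith)
    simp only [neg_neg, neg_sq] at h4
    calc |u z| ≤ M₂ * (1+z^2)^n₂ := h4
      _ ≤ max (max M₁ M₂) (max M₃ 0) * (1+z^2)^(max n₁ n₂) := by
        apply mul_le_mul (le_trans (le_max_right _ _) (le_max_left _ _))
          (base_pow_mono z (le_max_right _ _)) (by positivity) (by positivity)
  · have hmem : z ∈ Set.Icc (-T₂) T₁ := ⟨hz2.le, hz.le⟩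
    have h4 := hb₃ z hmem
    rw [Real.norm_eq_abs] at h4
    calc |u z| ≤ M₃ := h4
      _ = M₃ * 1 := (mul_one _).symm
      _ ≤ max (max M₁ M₂) (max M₃ 0) * (1+z^2)^(max n₁ n₂) := by
        apply mul_le_mul (le_trans (le_max_left _ _) (le_max_right _ _)) hbase1
          zero_le_one (by positivity)

private lemma lip_at (u : ℝ → ℝ) (hc : Continuous u) (hpr : PiecewiseRational u) (z₀ : ℝ) :
    ∃ δ L : ℝ, 0 < δ ∧ 0 ≤ L ∧ ∀ z : ℝ, |z - z₀| < δ → |u z - u z₀| ≤ L * |z - z₀| := by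
  obtain ⟨K, h, Q, R, hmono, hbot, htop, hpiece⟩ := hpr
  -- right side
  obtain ⟨δr, Lr, hδr, hLr, hr⟩ : ∃ δ L : ℝ, 0 < δ ∧ 0 ≤ L ∧
      ∀ z : ℝ, z₀ < z → z < z₀ + δ → |u z - u z₀| ≤ L * (z - z₀) := by
    classical
    set s : Finset (Fin (K+2)) := Finset.univ.filter (fun j => h j ≤ (z₀ : EReal)) with hs
    have hs0 : (0 : Fin (K+2)) ∈ s := by
      simp [hs, hbot]
    have hsne : s.Nonempty := ⟨0, hs0⟩
    set j := s.max' hsne with hj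
    have hjz : h j ≤ (z₀ : EReal) := by
      have := s.max'_mem hsne
      simpa [hs] using this
    have hjlt : (j : ℕ) < K + 1 := by
      rcases Nat.lt_or_ge (j : ℕ) (K+1) with h' | h'
      · exact h'
      · exfalso
        have : j = Fin.last (K+1) := by
          apply Fin.ext
          simp only [Fin.val_last]
          omega
        rw [this, htop] at hjz
        exact absurd hjz (by simp)
    set k : Fin (K+1) := ⟨(j : ℕ), hjlt⟩ with hk
    have hkc : k.castSucc = j := by
      apply Fin.ext; simp [hk]
    have hksucc : (z₀ : EReal) < h k.succ := by
      by_contra hcon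
      push_neg at hcon
      have hmem : k.succ ∈ s := by simp [hs, hcon]
      have hle := s.le_max' _ hmem
      rw [← hj] at hle
      have : j < k.succ := by
        rw [← hkc]
        exact Fin.castSucc_lt_succ
      exact absurd hle (not_le.2 this)
    obtain ⟨b, hb1, hb2⟩ := EReal.lt_iff_exists_real_btwn.1 hksucc
    have hb : z₀ < b := EReal.coe_lt_coe_iff.1 hb1
    refine right_lip u (Q k) (R k) z₀ b hb ?_ hc.continuousAt
    intro z h1 h2
    refine hpiece k z ?_ ?_
    · rw [hkc]
      exact lt_of_le_of_lt hjz (EReal.coe_lt_coe_iff.2 h1)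
    · exact lt_trans (EReal.coe_lt_coe_iff.2 h2) hb2
  -- left side via reflection
  obtain ⟨δl, Ll, hδl, hLl, hl⟩ : ∃ δ L : ℝ, 0 < δ ∧ 0 ≤ L ∧
      ∀ z : ℝ, z₀ - δ < z → z < z₀ → |u z - u z₀| ≤ L * (z₀ - z) := by
    classical
    set s : Finset (Fin (K+2)) := Finset.univ.filter (fun j => h j < (z₀ : EReal)) with hs
    have hs0 : (0 : Fin (K+2)) ∈ s := by
      simp [hs, hbot]
    have hsne : s.Nonempty := ⟨0, hs0⟩
    set j := s.max' hsne with hj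
    have hjz : h j < (z₀ : EReal) := by
      have := s.max'_mem hsne
      simpa [hs] using this
    have hjlt : (j : ℕ) < K + 1 := by
      rcases Nat.lt_or_ge (j : ℕ) (K+1) with h' | h'
      · exact h'
      · exfalso
        have : j = Fin.last (K+1) := by
          apply Fin.ext; simp only [Fin.val_last]; omega
        rw [this, htop] at hjz
        exact absurd hjz (by simp)
    set k : Fin (K+1) := ⟨(j : ℕ), hjlt⟩ with hk
    have hkc : k.castSucc = j := by apply Fin.ext; simp [hk]
    have hksucc : (z₀ : EReal) ≤ h k.succ := by
      by_contra hcon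
      push_neg at hcon
      have hmem : k.succ ∈ s := by simp [hs, hcon]
      have hle := s.le_max' _ hmem
      rw [← hj] at hle
      have : j < k.succ := by rw [← hkc]; exact Fin.castSucc_lt_succ
      exact absurd hle (not_le.2 this)
    obtain ⟨a, ha1, ha2⟩ := EReal.lt_iff_exists_real_btwn.1 hjz
    have ha : a < z₀ := EReal.coe_lt_coe_iff.1 ha2
    -- reflected function
    have hdata : ∀ z : ℝ, z₀ < z → z < z₀ + (z₀ - a) →
        ((R k).comp (C (2*z₀) - X)).eval z ≠ 0 ∧
        u (2*z₀ - z) = ((Q k).comp (C (2*z₀) - X)).eval z /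
          ((R k).comp (C (2*z₀) - X)).eval z := by
      intro z h1 h2
      have hy1 : a < 2*z₀ - z := by linarith
      have hy2 : 2*z₀ - z < z₀ := by linarith
      have h3 := hpiece k (2*z₀ - z) (by
          rw [hkc]
          exact lt_trans ha1 (EReal.coe_lt_coe_iff.2 hy1))
        (lt_of_lt_of_le (EReal.coe_lt_coe_iff.2 hy2) hksucc)
      simpa [Polynomial.eval_comp] using h3
    have hcont2 : ContinuousAt (fun z => u (2*z₀ - z)) z₀ := by
      apply (hc.comp (by continuity : Continuous fun z : ℝ => 2*z₀ - z)).continuousAt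
    obtain ⟨δ, L, hδ, hL, hlip⟩ := right_lip (fun z => u (2*z₀ - z)) _ _ z₀ (z₀ + (z₀ - a))
      (by linarith) hdata hcont2
    refine ⟨δ, L, hδ, hL, fun z h1 h2 => ?_⟩
    have := hlip (2*z₀ - z) (by linarith) (by linarith)
    simp only [show 2*z₀ - z₀ = z₀ by ring] at this
    have heq : 2*z₀ - (2*z₀ - z) = z := by ring
    convert this using 2 <;> [skip; ring]
    rw [show (2:ℝ)*z₀ - (2*z₀ - z) = z by ring]
  refine ⟨min δr δl, max Lr Ll, lt_min hδr hδl, le_max_of_le_left hLr, fun z hz => ?_⟩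
  rcases lt_trichotomy z z₀ with h' | h' | h'
  · have h1 : z₀ - δl < z := by
      have : |z - z₀| < δl := lt_of_lt_of_le hz (min_le_right _ _)
      rw [abs_of_neg (by linarith)] at this
      linarith
    have h2 := hl z h1 h'
    rw [abs_of_neg (by linarith : z - z₀ < 0)]
    calc |u z - u z₀| ≤ Ll * (z₀ - z) := h2
      _ ≤ max Lr Ll * -(z - z₀) := by
        rw [show -(z - z₀) = z₀ - z by ring]
        exact mul_le_mul_of_nonneg_right (le_max_right _ _) (by linarith)
  · simp [h']
  · have h1 : z < z₀ + δr := by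
      have : |z - z₀| < δr := lt_of_lt_of_le hz (min_le_left _ _)
      rw [abs_of_pos (by linarith)] at this
      linarith
    have h2 := hr z h' h1
    rw [abs_of_pos (by linarith : 0 < z - z₀)]
    calc |u z - u z₀| ≤ Lr * (z - z₀) := h2
      _ ≤ max Lr Ll * (z - z₀) := mul_le_mul_of_nonneg_right (le_max_left _ _) (by linarith)

private lemma key_bound (u : ℝ → ℝ) (hc : Continuous u) (hpr : PiecewiseRational u) (z₀ : ℝ) :
    ∃ (M : ℝ) (n : ℕ), 0 ≤ M ∧ ∀ z : ℝ, |u z - u z₀| ≤ M * (1+z^2)^n * |z - z₀| := by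
  obtain ⟨δ, L, hδ, hL, hlip⟩ := lip_at u hc hpr z₀
  obtain ⟨M, n, hM, hgb⟩ := global_bound u hc hpr
  refine ⟨max L ((M + M + |u z₀| + |u z₀|) / δ), n, le_max_of_le_left hL, fun z => ?_⟩
  have hbase1 : (1:ℝ) ≤ (1+z^2)^n := one_le_pow₀ (by nlinarith [sq_nonneg z])
  have hbnn : (0:ℝ) ≤ (1+z^2)^n := by positivity
  rcases lt_or_ge |z - z₀| δ with hz | hz
  · calc |u z - u z₀| ≤ L * |z - z₀| := hlip z hz
      _ ≤ max L ((M + M + |u z₀| + |u z₀|) / δ) * (1+z^2)^n * |z - z₀| := by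
        apply mul_le_mul_of_nonneg_right _ (abs_nonneg _)
        calc L = L * 1 := (mul_one _).symm
          _ ≤ max L ((M + M + |u z₀| + |u z₀|) / δ) * (1+z^2)^n :=
            mul_le_mul (le_max_left _ _) hbase1 zero_le_one (le_trans hL (le_max_left _ _))
  · have h1 : |u z - u z₀| ≤ (M + |u z₀|) * (1+z^2)^n := by
      calc |u z - u z₀| ≤ |u z| + |u z₀| := abs_sub _ _
        _ ≤ M * (1+z^2)^n + |u z₀| * (1+z^2)^n := by
          apply add_le_add (hgb z)
          calc |u z₀| = |u z₀| * 1 := (mul_one _).symm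
            _ ≤ |u z₀| * (1+z^2)^n := mul_le_mul_of_nonneg_left hbase1 (abs_nonneg _)
        _ = (M + |u z₀|) * (1+z^2)^n := by ring
    calc |u z - u z₀| ≤ (M + |u z₀|) * (1+z^2)^n := h1
      _ = ((M + |u z₀|) / δ) * (1+z^2)^n * δ := by field_simp
      _ ≤ max L ((M + M + |u z₀| + |u z₀|) / δ) * (1+z^2)^n * |z - z₀| := by
        apply mul_le_mul _ hz hδ.le (by positivity)
        apply mul_le_mul_of_nonneg_right _ hbnn
        refine le_trans ?_ (le_max_right _ _)
        gcongr
        all_goals nlinarith [abs_nonneg (u z₀)]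

/-- Given continuous piecewise rational `u, w : ℝ → ℝ` with `u z₀ = w z₀`, there are
polynomials `P`, `Q` such that `P ≤ u` on `(-∞, z₀]`, `u ≤ P` and `w ≤ P` on `[z₀, ∞)`,
`u ≤ Q` and `w ≤ Q` on `(-∞, z₀]`, `Q ≤ w` on `[z₀, ∞)`; consequently the function that
equals `u` on `(-∞, z₀]` and `w` on `(z₀, ∞)` is `min (max u P) (max w Q)` pointwise. -/
theorem exists_sandwich_polynomials (u w : ℝ → ℝ)
    (hucont : Continuous u) (hupr : PiecewiseRational u)
    (hwcont : Continuous w) (hwpr : PiecewiseRational w)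
    (z₀ : ℝ) (h₀ : u z₀ = w z₀) :
    ∃ P Q : Polynomial ℝ,
      (∀ z : ℝ, z ≤ z₀ → P.eval z ≤ u z) ∧
      (∀ z : ℝ, z₀ ≤ z → u z ≤ P.eval z ∧ w z ≤ P.eval z) ∧
      (∀ z : ℝ, z ≤ z₀ → u z ≤ Q.eval z ∧ w z ≤ Q.eval z) ∧
      (∀ z : ℝ, z₀ ≤ z → Q.eval z ≤ w z) ∧
      (∀ z : ℝ, (if z ≤ z₀ then u z else w z) =
        min (max (u z) (P.eval z)) (max (w z) (Q.eval z))) := by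
  obtain ⟨Mu, nu, hMu, hu⟩ := key_bound u hucont hupr z₀
  obtain ⟨Mw, nw, hMw, hw⟩ := key_bound w hwcont hwpr z₀
  set c := u z₀ with hcdef
  set n := max nu nw with hn
  set M := Mu + Mw with hM
  set E : ℝ[X] := C M * (1 + X^2)^n with hE
  have hEeval : ∀ z : ℝ, E.eval z = M * (1+z^2)^n := by
    intro z; simp [hE]
  have hE0 : ∀ z : ℝ, 0 ≤ E.eval z := by
    intro z; rw [hEeval]
    have : (0:ℝ) ≤ M := by linarith
    positivity
  have hub : ∀ z : ℝ, |u z - c| ≤ E.eval z * |z - z₀| := by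
    intro z
    rw [hEeval]
    calc |u z - c| ≤ Mu * (1+z^2)^nu * |z - z₀| := hu z
      _ ≤ M * (1+z^2)^n * |z - z₀| := by
        apply mul_le_mul_of_nonneg_right _ (abs_nonneg _)
        apply mul_le_mul (by linarith) (base_pow_mono z (le_max_left _ _))
          (by positivity) (by linarith)
  have hwb : ∀ z : ℝ, |w z - c| ≤ E.eval z * |z - z₀| := by
    intro z
    rw [hEeval, h₀]
    calc |w z - w z₀| ≤ Mw * (1+z^2)^nw * |z - z₀| := hw z
      _ ≤ M * (1+z^2)^n * |z - z₀| := by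
        apply mul_le_mul_of_nonneg_right _ (abs_nonneg _)
        apply mul_le_mul (by linarith) (base_pow_mono z (le_max_right _ _))
          (by positivity) (by linarith)
  refine ⟨C c + (X - C z₀) * E, C c - (X - C z₀) * E, ?_, ?_, ?_, ?_, ?_⟩
  · intro z hz
    have h1 := (abs_le.1 (hub z)).1
    rw [abs_of_nonpos (by linarith : z - z₀ ≤ 0)] at h1
    simp only [eval_add, eval_sub, eval_mul, eval_C, eval_X]
    nlinarith [hE0 z]
  · intro z hz
    have h1 := (abs_le.1 (hub z)).2
    have h2 := (abs_le.1 (hwb z)).2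
    rw [abs_of_nonneg (by linarith : (0:ℝ) ≤ z - z₀)] at h1 h2
    simp only [eval_add, eval_sub, eval_mul, eval_C, eval_X]
    constructor <;> nlinarith [hE0 z]
  · intro z hz
    have h1 := (abs_le.1 (hub z)).2
    have h2 := (abs_le.1 (hwb z)).2
    rw [abs_of_nonpos (by linarith : z - z₀ ≤ 0)] at h1 h2
    simp only [eval_add, eval_sub, eval_mul, eval_C, eval_X]
    constructor <;> nlinarith [hE0 z]
  · intro z hz
    have h1 := (abs_le.1 (hwb z)).1
    rw [abs_of_nonneg (by linarith : (0:ℝ) ≤ z - z₀)] at h1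
    simp only [eval_add, eval_sub, eval_mul, eval_C, eval_X]
    nlinarith [hE0 z]
  · intro z
    split_ifs with hle
    · have hP : (C c + (X - C z₀) * E).eval z ≤ u z := by
        have h1 := (abs_le.1 (hub z)).1
        rw [abs_of_nonpos (by linarith : z - z₀ ≤ 0)] at h1
        simp only [eval_add, eval_sub, eval_mul, eval_C, eval_X]
        nlinarith [hE0 z]
      have hQ : u z ≤ (C c - (X - C z₀) * E).eval z := by
        have h1 := (abs_le.1 (hub z)).2
        rw [abs_of_nonpos (by linarith : z - z₀ ≤ 0)] at h1
        simp only [eval_add, eval_sub, eval_mul, eval_C, eval_X]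
        nlinarith [hE0 z]
      rw [max_eq_left hP, min_eq_left (le_trans hQ (le_max_right _ _))]
    · push_neg at hle
      have hP : w z ≤ (C c + (X - C z₀) * E).eval z := by
        have h2 := (abs_le.1 (hwb z)).2
        rw [abs_of_nonneg (by linarith : (0:ℝ) ≤ z - z₀)] at h2
        simp only [eval_add, eval_sub, eval_mul, eval_C, eval_X]
        nlinarith [hE0 z]
      have hQ : (C c - (X - C z₀) * E).eval z ≤ w z := by
        have h1 := (abs_le.1 (hwb z)).1
        rw [abs_of_nonneg (by linarith : (0:ℝ) ≤ z - z₀)] at h1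
        simp only [eval_add, eval_sub, eval_mul, eval_C, eval_X]
        nlinarith [hE0 z]
      rw [max_eq_left hQ, min_eq_right (le_trans hP (le_max_right _ _))]
end

section
/- Let I = [α, β] be a compact interval in ℝ with α < β. For every natural number k, there exists a linear game (a polynomial game in which every payoff entry is a polynomial of degree at most 1 in Z) whose value function agrees with z ↦ z^k on I. -/
open Polynomial

namespace LinGameAux

variable {A B : Type} [Fintype A] [Fintype B]

/-- Both players have exactly equalizing strategies guaranteeing `v`. -/
def IsEqualized (G : A → B → ℝ) (v : ℝ) : Prop :=
  (∃ x ∈ stdSimplex ℝ A, ∀ b, ∑ a : A, x a * G a b = v) ∧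
  (∃ y ∈ stdSimplex ℝ B, ∀ a, ∑ b : B, G a b * y b = v)

theorem matrixValue_of_isEqualized {G : A → B → ℝ} {v : ℝ}
    (h : IsEqualized G v) : matrixValue G = v := by
  obtain ⟨⟨x₀, hx₀, hx⟩, ⟨y₀, hy₀, hy⟩⟩ := h
  set F : stdSimplex ℝ A → stdSimplex ℝ B → ℝ :=
    fun x y => ∑ a : A, ∑ b : B, x.1 a * G a b * y.1 b with hF
  have hxs : (⟨x₀, hx₀⟩ : stdSimplex ℝ A) ∈ Set.univ := Set.mem_univ _
  haveI : Nonempty (stdSimplex ℝ A) := ⟨⟨x₀, hx₀⟩⟩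
  haveI : Nonempty (stdSimplex ℝ B) := ⟨⟨y₀, hy₀⟩⟩
  -- playing y₀ gives v against any x
  have hFy : ∀ x : stdSimplex ℝ A, F x ⟨y₀, hy₀⟩ = v := by
    intro x
    have : ∀ a : A, ∑ b : B, x.1 a * G a b * y₀ b = x.1 a * v := by
      intro a
      rw [show (∑ b : B, x.1 a * G a b * y₀ b) = x.1 a * ∑ b : B, G a b * y₀ b by
        rw [Finset.mul_sum]; exact Finset.sum_congr rfl fun b _ => by ring, hy a]
    simp only [hF]
    rw [Finset.sum_congr rfl fun a _ => this a, ← Finset.sum_mul, x.2.2, one_mul]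
  -- playing x₀ gives v against any y
  have hFx : ∀ y : stdSimplex ℝ B, F ⟨x₀, hx₀⟩ y = v := by
    intro y
    simp only [hF]
    rw [Finset.sum_comm]
    have : ∀ b : B, ∑ a : A, x₀ a * G a b * y.1 b = v * y.1 b := by
      intro b
      rw [show (∑ a : A, x₀ a * G a b * y.1 b) = (∑ a : A, x₀ a * G a b) * y.1 b by
        rw [Finset.sum_mul], hx b]
    rw [Finset.sum_congr rfl fun b _ => this b, ← Finset.mul_sum, y.2.2, mul_one]
  -- lower bound for everything
  set C : ℝ := ∑ a : A, ∑ b : B, |G a b| with hC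
  have hLB : ∀ (x : stdSimplex ℝ A) (y : stdSimplex ℝ B), -C ≤ F x y := by
    intro x y
    have hx1 : ∀ a, x.1 a ≤ 1 := by
      intro a
      have := Finset.single_le_sum (f := x.1) (fun i _ => x.2.1 i) (Finset.mem_univ a)
      simpa [x.2.2] using this
    have hy1 : ∀ b, y.1 b ≤ 1 := by
      intro b
      have := Finset.single_le_sum (f := y.1) (fun i _ => y.2.1 i) (Finset.mem_univ b)
      simpa [y.2.2] using this
    have : ∀ a b, -|G a b| ≤ x.1 a * G a b * y.1 b := by
      intro a b
      have h1 : |x.1 a * G a b * y.1 b| ≤ |G a b| := by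
        rw [abs_mul, abs_mul]
        have hxa : |x.1 a| ≤ 1 := by rw [abs_of_nonneg (x.2.1 a)]; exact hx1 a
        have hyb : |y.1 b| ≤ 1 := by rw [abs_of_nonneg (y.2.1 b)]; exact hy1 b
        calc |x.1 a| * |G a b| * |y.1 b| ≤ 1 * |G a b| * 1 := by
              apply mul_le_mul _ hyb (abs_nonneg _) (by positivity)
              exact mul_le_mul hxa le_rfl (abs_nonneg _) zero_le_one
          _ = |G a b| := by ring
      linarith [neg_abs_le (x.1 a * G a b * y.1 b), h1]
    calc -C = ∑ a : A, ∑ b : B, -|G a b| := by simp [hC]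
      _ ≤ F x y := by
        apply Finset.sum_le_sum; intro a _
        exact Finset.sum_le_sum fun b _ => this a b
  have hinf_le : ∀ x : stdSimplex ℝ A, (⨅ y : stdSimplex ℝ B, F x y) ≤ v := by
    intro x
    have hbb : BddBelow (Set.range fun y : stdSimplex ℝ B => F x y) := by
      refine ⟨-C, ?_⟩; rintro _ ⟨y, rfl⟩; exact hLB x y
    have := ciInf_le hbb (⟨y₀, hy₀⟩ : stdSimplex ℝ B)
    rwa [hFy x] at this
  have hge : v ≤ matrixValue G := by
    have h1 : v ≤ ⨅ y : stdSimplex ℝ B, F ⟨x₀, hx₀⟩ y :=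
      le_ciInf fun y => (hFx y).ge
    have hba : BddAbove (Set.range fun x : stdSimplex ℝ A => ⨅ y : stdSimplex ℝ B, F x y) := by
      refine ⟨v, ?_⟩; rintro _ ⟨x, rfl⟩; exact hinf_le x
    exact h1.trans (le_ciSup hba (⟨x₀, hx₀⟩ : stdSimplex ℝ A))
  have hle : matrixValue G ≤ v := ciSup_le hinf_le
  exact le_antisymm hle hge


lemma sum_prod_mul {A A' : Type} [Fintype A] [Fintype A'] (u : A → ℝ) (v : A' → ℝ) :
    ∑ p : A × A', u p.1 * v p.2 = (∑ a : A, u a) * (∑ a' : A', v a') := by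
  rw [Finset.sum_mul_sum, Fintype.sum_prod_type]

/-- A function realizable as the exactly-equalized value of a linear game on `[α, β]`. -/
def EqGame (α β : ℝ) (f : ℝ → ℝ) : Prop :=
  ∃ (A B : Type) (iA : Fintype A) (iB : Fintype B), Nonempty A ∧ Nonempty B ∧
    ∃ G : A → B → Polynomial ℝ, (∀ a b, (G a b).degree ≤ 1) ∧
      ∀ w ∈ Set.Icc α β, @IsEqualized A B iA iB (fun a b => (G a b).eval w) (f w)

lemma eqGame_const (α β c : ℝ) : EqGame α β (fun _ => c) := by
  refine ⟨PUnit, PUnit, inferInstance, inferInstance, ⟨⟨⟩⟩, ⟨⟨⟩⟩, fun _ _ => C c,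
    fun _ _ => degree_C_le.trans (by norm_num), fun w _ => ?_⟩
  constructor
  · exact ⟨fun _ => 1, ⟨fun _ => zero_le_one, by simp⟩, fun b => by simp⟩
  · exact ⟨fun _ => 1, ⟨fun _ => zero_le_one, by simp⟩, fun a => by simp⟩

lemma eqGame_id (α β : ℝ) : EqGame α β (fun w => w) := by
  refine ⟨PUnit, PUnit, inferInstance, inferInstance, ⟨⟨⟩⟩, ⟨⟨⟩⟩, fun _ _ => X,
    fun _ _ => degree_X_le, fun w _ => ?_⟩
  constructor
  · exact ⟨fun _ => 1, ⟨fun _ => zero_le_one, by simp⟩, fun b => by simp⟩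
  · exact ⟨fun _ => 1, ⟨fun _ => zero_le_one, by simp⟩, fun a => by simp⟩

lemma eqGame_add {α β : ℝ} {f g : ℝ → ℝ} (hf : EqGame α β f) (hg : EqGame α β g) :
    EqGame α β (fun w => f w + g w) := by
  obtain ⟨A1, B1, iA1, iB1, nA1, nB1, G1, hd1, h1⟩ := hf
  obtain ⟨A2, B2, iA2, iB2, nA2, nB2, G2, hd2, h2⟩ := hg
  letI := iA1; letI := iB1; letI := iA2; letI := iB2
  haveI := nA1; haveI := nB1; haveI := nA2; haveI := nB2
  refine ⟨A1 × A2, B1 × B2, inferInstance, inferInstance, inferInstance, inferInstance,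
    fun p q => G1 p.1 q.1 + G2 p.2 q.2,
    fun p q => (degree_add_le _ _).trans (max_le (hd1 _ _) (hd2 _ _)), fun w hw => ?_⟩
  obtain ⟨⟨x1, hx1m, hx1⟩, ⟨y1, hy1m, hy1⟩⟩ := h1 w hw
  obtain ⟨⟨x2, hx2m, hx2⟩, ⟨y2, hy2m, hy2⟩⟩ := h2 w hw
  constructor
  · refine ⟨fun p => x1 p.1 * x2 p.2, ⟨fun p => mul_nonneg (hx1m.1 p.1) (hx2m.1 p.2), ?_⟩, ?_⟩
    · rw [sum_prod_mul, hx1m.2, hx2m.2, one_mul]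
    · intro q
      simp only [eval_add]
      calc ∑ p : A1 × A2, x1 p.1 * x2 p.2 * ((G1 p.1 q.1).eval w + (G2 p.2 q.2).eval w)
          = ∑ p : A1 × A2, ((x1 p.1 * (G1 p.1 q.1).eval w) * x2 p.2
              + x1 p.1 * (x2 p.2 * (G2 p.2 q.2).eval w)) :=
            Finset.sum_congr rfl fun p _ => by ring
        _ = (∑ a : A1, x1 a * (G1 a q.1).eval w) * (∑ a' : A2, x2 a')
              + (∑ a : A1, x1 a) * (∑ a' : A2, x2 a' * (G2 a' q.2).eval w) := by
            rw [Finset.sum_add_distrib,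
              sum_prod_mul (fun a => x1 a * (G1 a q.1).eval w) x2,
              sum_prod_mul x1 (fun a' => x2 a' * (G2 a' q.2).eval w)]
        _ = f w + g w := by rw [hx1 q.1, hx2 q.2, hx1m.2, hx2m.2]; ring
  · refine ⟨fun q => y1 q.1 * y2 q.2, ⟨fun q => mul_nonneg (hy1m.1 q.1) (hy2m.1 q.2), ?_⟩, ?_⟩
    · rw [sum_prod_mul, hy1m.2, hy2m.2, one_mul]
    · intro p
      simp only [eval_add]
      calc ∑ q : B1 × B2, ((G1 p.1 q.1).eval w + (G2 p.2 q.2).eval w) * (y1 q.1 * y2 q.2)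
          = ∑ q : B1 × B2, (((G1 p.1 q.1).eval w * y1 q.1) * y2 q.2
              + y1 q.1 * ((G2 p.2 q.2).eval w * y2 q.2)) :=
            Finset.sum_congr rfl fun q _ => by ring
        _ = (∑ b : B1, (G1 p.1 b).eval w * y1 b) * (∑ b' : B2, y2 b')
              + (∑ b : B1, y1 b) * (∑ b' : B2, (G2 p.2 b').eval w * y2 b') := by
            rw [Finset.sum_add_distrib,
              sum_prod_mul (fun b => (G1 p.1 b).eval w * y1 b) y2,
              sum_prod_mul y1 (fun b' => (G2 p.2 b').eval w * y2 b')]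
        _ = f w + g w := by rw [hy1 p.1, hy2 p.2, hy1m.2, hy2m.2]; ring

lemma eqGame_smul {α β : ℝ} (c : ℝ) {f : ℝ → ℝ} (hf : EqGame α β f) :
    EqGame α β (fun w => c * f w) := by
  obtain ⟨A, B, iA, iB, nA, nB, G, hd, h⟩ := hf
  letI := iA; letI := iB
  refine ⟨A, B, iA, iB, nA, nB, fun a b => c • G a b,
    fun a b => (degree_smul_le _ _).trans (hd a b), fun w hw => ?_⟩
  obtain ⟨⟨x, hxm, hx⟩, ⟨y, hym, hy⟩⟩ := h w hw
  constructor
  · refine ⟨x, hxm, fun b => ?_⟩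
    simp only [eval_smul, smul_eq_mul]
    calc ∑ a : A, x a * (c * (G a b).eval w) = c * ∑ a : A, x a * (G a b).eval w := by
          rw [Finset.mul_sum]; exact Finset.sum_congr rfl fun a _ => by ring
      _ = c * f w := by rw [hx b]
  · refine ⟨y, hym, fun a => ?_⟩
    simp only [eval_smul, smul_eq_mul]
    calc ∑ b : B, c * (G a b).eval w * y b = c * ∑ b : B, (G a b).eval w * y b := by
          rw [Finset.mul_sum]; exact Finset.sum_congr rfl fun b _ => by ring
      _ = c * f w := by rw [hy a]


lemma eqGame_sq {α β M : ℝ} {f : ℝ → ℝ} (hM : ∀ w ∈ Set.Icc α β, |f w| ≤ M)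
    (hf : EqGame α β f) : EqGame α β (fun w => f w ^ 2) := by
  obtain ⟨A, B, iA, iB, nA, nB, G, hd, h⟩ := hf
  letI := iA; letI := iB
  haveI := nA; haveI := nB
  set s : Fin 2 → ℝ := fun i => if i = 0 then -(M + 1) else (M + 1) with hs
  refine ⟨A × Fin 2, B × Fin 2, inferInstance, inferInstance, inferInstance, inferInstance,
    fun p q => (s p.2 + s q.2) • G p.1 q.1 - C (s p.2 * s q.2),
    fun p q => (degree_sub_le _ _).trans (max_le ((degree_smul_le _ _).trans (hd _ _))
      (degree_C_le.trans (by norm_num))), fun w hw => ?_⟩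
  obtain ⟨⟨x, hxm, hx⟩, ⟨y, hym, hy⟩⟩ := h w hw
  have hb : |f w| ≤ M := hM w hw
  have hM0 : (0 : ℝ) ≤ M := le_trans (abs_nonneg _) hb
  have hM1 : (0 : ℝ) < M + 1 := by linarith
  have hfu : f w ≤ M + 1 := by
    have := le_of_abs_le hb; linarith
  have hfl : -(M + 1) ≤ f w := by
    have := neg_abs_le (f w); have := neg_le_of_abs_le hb; linarith
  set θ : ℝ := (M + 1 - f w) / (2 * (M + 1)) with hθ
  set ξ : Fin 2 → ℝ := fun i => if i = 0 then θ else 1 - θ with hξ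
  have hθ0 : 0 ≤ θ := div_nonneg (by linarith) (by linarith)
  have hθ1 : θ ≤ 1 := by
    rw [hθ, div_le_one (by linarith)]; linarith
  have hξ0 : ∀ i, 0 ≤ ξ i := by
    intro i; rw [hξ]; dsimp only; split
    · exact hθ0
    · linarith
  have hξsum : ∑ i : Fin 2, ξ i = 1 := by
    rw [Fin.sum_univ_two, hξ]; norm_num
  have hξs : ∑ i : Fin 2, ξ i * s i = f w := by
    rw [Fin.sum_univ_two, hξ, hs]
    have h2 : (2 : ℝ) * (M + 1) ≠ 0 := by positivity
    simp only [hθ]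
    norm_num
    field_simp
    ring
  constructor
  · -- row player equalizes: mixed strategy x ⊗ ξ
    refine ⟨fun p => x p.1 * ξ p.2, ⟨fun p => mul_nonneg (hxm.1 p.1) (hξ0 p.2), ?_⟩, ?_⟩
    · rw [sum_prod_mul x ξ, hxm.2, hξsum, one_mul]
    · intro q
      simp only [eval_sub, eval_smul, eval_C, smul_eq_mul]
      calc ∑ p : A × Fin 2, x p.1 * ξ p.2 * ((s p.2 + s q.2) * (G p.1 q.1).eval w
              - s p.2 * s q.2)
          = ∑ p : A × Fin 2, ((x p.1 * (G p.1 q.1).eval w) * (ξ p.2 * s p.2)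
              + (x p.1 * (G p.1 q.1).eval w) * (ξ p.2 * s q.2)
              - x p.1 * (ξ p.2 * (s p.2 * s q.2))) :=
            Finset.sum_congr rfl fun p _ => by ring
        _ = (∑ p : A × Fin 2, (x p.1 * (G p.1 q.1).eval w) * (ξ p.2 * s p.2))
            + (∑ p : A × Fin 2, (x p.1 * (G p.1 q.1).eval w) * (ξ p.2 * s q.2))
            - ∑ p : A × Fin 2, x p.1 * (ξ p.2 * (s p.2 * s q.2)) := by
            rw [Finset.sum_sub_distrib, Finset.sum_add_distrib]
        _ = (∑ a : A, x a * (G a q.1).eval w) * (∑ i : Fin 2, ξ i * s i)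
            + (∑ a : A, x a * (G a q.1).eval w) * (∑ i : Fin 2, ξ i * s q.2)
            - (∑ a : A, x a) * (∑ i : Fin 2, ξ i * (s i * s q.2)) := by
            rw [sum_prod_mul (fun a => x a * (G a q.1).eval w) (fun i => ξ i * s i),
              sum_prod_mul (fun a => x a * (G a q.1).eval w) (fun i => ξ i * s q.2),
              sum_prod_mul x (fun i => ξ i * (s i * s q.2))]
        _ = f w ^ 2 := by
            have e1 : ∑ i : Fin 2, ξ i * s q.2 = s q.2 := by
              rw [← Finset.sum_mul, hξsum, one_mul]
            have e2 : ∑ i : Fin 2, ξ i * (s i * s q.2) = f w * s q.2 := by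
              rw [show (∑ i : Fin 2, ξ i * (s i * s q.2))
                  = (∑ i : Fin 2, ξ i * s i) * s q.2 by
                rw [Finset.sum_mul]; exact Finset.sum_congr rfl fun i _ => by ring, hξs]
            rw [hx q.1, hξs, e1, e2, hxm.2]; ring
  · -- column player equalizes: mixed strategy y ⊗ ξ
    refine ⟨fun q => y q.1 * ξ q.2, ⟨fun q => mul_nonneg (hym.1 q.1) (hξ0 q.2), ?_⟩, ?_⟩
    · rw [sum_prod_mul y ξ, hym.2, hξsum, one_mul]
    · intro p
      simp only [eval_sub, eval_smul, eval_C, smul_eq_mul]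
      calc ∑ q : B × Fin 2, ((s p.2 + s q.2) * (G p.1 q.1).eval w - s p.2 * s q.2)
              * (y q.1 * ξ q.2)
          = ∑ q : B × Fin 2, (((G p.1 q.1).eval w * y q.1) * (ξ q.2 * s q.2)
              + (s p.2 * ((G p.1 q.1).eval w * y q.1)) * (ξ q.2)
              - (s p.2 * y q.1) * (ξ q.2 * s q.2)) :=
            Finset.sum_congr rfl fun q _ => by ring
        _ = (∑ q : B × Fin 2, ((G p.1 q.1).eval w * y q.1) * (ξ q.2 * s q.2))
            + (∑ q : B × Fin 2, (s p.2 * ((G p.1 q.1).eval w * y q.1)) * (ξ q.2))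
            - ∑ q : B × Fin 2, (s p.2 * y q.1) * (ξ q.2 * s q.2) := by
            rw [Finset.sum_sub_distrib, Finset.sum_add_distrib]
        _ = (∑ b : B, (G p.1 b).eval w * y b) * (∑ i : Fin 2, ξ i * s i)
            + (∑ b : B, s p.2 * ((G p.1 b).eval w * y b)) * (∑ i : Fin 2, ξ i)
            - (∑ b : B, s p.2 * y b) * (∑ i : Fin 2, ξ i * s i) := by
            rw [sum_prod_mul (fun b => (G p.1 b).eval w * y b) (fun i => ξ i * s i),
              sum_prod_mul (fun b => s p.2 * ((G p.1 b).eval w * y b)) ξ,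
              sum_prod_mul (fun b => s p.2 * y b) (fun i => ξ i * s i)]
        _ = f w ^ 2 := by
            have e1 : ∑ b : B, s p.2 * ((G p.1 b).eval w * y b) = s p.2 * f w := by
              rw [← Finset.mul_sum, hy p.1]
            have e2 : ∑ b : B, s p.2 * y b = s p.2 := by
              rw [← Finset.mul_sum, hym.2, mul_one]
            rw [hy p.1, hξs, hξsum, e1, e2]; ring


lemma eqGame_mul {α β Mf Mg : ℝ} {f g : ℝ → ℝ}
    (hMf : ∀ w ∈ Set.Icc α β, |f w| ≤ Mf) (hMg : ∀ w ∈ Set.Icc α β, |g w| ≤ Mg)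
    (hf : EqGame α β f) (hg : EqGame α β g) : EqGame α β (fun w => f w * g w) := by
  have hsum : EqGame α β (fun w => f w + g w) := eqGame_add hf hg
  have hMsum : ∀ w ∈ Set.Icc α β, |f w + g w| ≤ Mf + Mg := fun w hw =>
    (abs_add_le _ _).trans (add_le_add (hMf w hw) (hMg w hw))
  have h1 : EqGame α β (fun w => (f w + g w) ^ 2) := eqGame_sq hMsum hsum
  have h2 : EqGame α β (fun w => (-1 : ℝ) * (f w ^ 2)) := eqGame_smul (-1) (eqGame_sq hMf hf)
  have h3 : EqGame α β (fun w => (-1 : ℝ) * (g w ^ 2)) := eqGame_smul (-1) (eqGame_sq hMg hg)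
  have h4 : EqGame α β (fun w => ((f w + g w) ^ 2 + (-1 : ℝ) * (f w ^ 2))
      + (-1 : ℝ) * (g w ^ 2)) := eqGame_add (eqGame_add h1 h2) h3
  have h5 := eqGame_smul (1 / 2 : ℝ) h4
  have hfun : (fun w => (1 / 2 : ℝ) * (((f w + g w) ^ 2 + (-1 : ℝ) * (f w ^ 2))
      + (-1 : ℝ) * (g w ^ 2))) = fun w => f w * g w := funext fun w => by ring
  rwa [hfun] at h5

lemma eqGame_pow (α β : ℝ) : ∀ k : ℕ, EqGame α β (fun w => w ^ k) := by
  intro k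
  induction k with
  | zero =>
    have := eqGame_const α β 1
    have hfun : (fun _ : ℝ => (1 : ℝ)) = fun w : ℝ => w ^ 0 := funext fun w => by norm_num
    rwa [hfun] at this
  | succ k ih =>
    set R : ℝ := |α| + |β| with hR
    have hbound : ∀ (m : ℕ), ∀ w ∈ Set.Icc α β, |w ^ m| ≤ R ^ m := by
      intro m w hw
      have h1 : |w| ≤ R := by
        rcases hw with ⟨h2, h3⟩
        rw [abs_le]; constructor
        · have := neg_abs_le α; linarith [abs_nonneg β]
        · have := le_abs_self β; linarith [abs_nonneg α]
      rw [abs_pow]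
      exact pow_le_pow_left₀ (abs_nonneg w) h1 m
    have hmul := eqGame_mul (hbound k) (hbound 1) ih
      (by
        have := eqGame_id α β
        have hfun : (fun w : ℝ => w) = fun w : ℝ => w ^ 1 := funext fun w => by ring
        rwa [hfun] at this)
    have hfun : (fun w : ℝ => w ^ k * w ^ 1) = fun w : ℝ => w ^ (k + 1) :=
      funext fun w => by ring
    rwa [hfun] at hmul

end LinGameAux

/-- For every compact interval `I = [α, β]` with `α < β` and every `k ∈ ℕ`, there is a
linear game whose value function agrees with `z ↦ z ^ k` on `I`. -/
theorem monomial_is_linear_game_value_on_interval (α β : ℝ) (hαβ : α < β) (k : ℕ) :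
    ∃ (A B : Type) (iA : Fintype A) (iB : Fintype B), Nonempty A ∧ Nonempty B ∧
      ∃ G : A → B → Polynomial ℝ, (∀ a b, (G a b).degree ≤ 1) ∧
        ∀ z ∈ Set.Icc α β, (@matrixValue A B iA iB fun a b => (G a b).eval z) = z ^ k := by
  obtain ⟨A, B, iA, iB, nA, nB, G, hd, h⟩ := LinGameAux.eqGame_pow α β k
  refine ⟨A, B, iA, iB, nA, nB, G, hd, fun z hz => ?_⟩
  letI := iA; letI := iB
  exact LinGameAux.matrixValue_of_isEqualized (h z hz)
end
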